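/- arXiv:2010.09565 — 5 statements merged into one kernel-verified Lean document; each statement's English description precedes it below -/
import Mathlib

section
/- Let d ≥ 2, let K ⊆ ℝ^d be a convex body and let δ ∈ (0, vol(K)). If K floats in equilibrium in direction ξ at level δ for every unit vector ξ ∈ S^{d−1}, then the surface of centers is a sphere centered at the center of mass of K: there exists R ≥ 0 such that ‖C_δ(ξ) − C(K)‖ = R for every ξ ∈ S^{d−1}. -/
open MeasureTheory Metric Set Filter
open scoped InnerProductSpace ENNReal Pointwise NNReal Topology

set_option maxHeartbeats 1000000

/-- The center of mass of a set `L` with respect to a measure `μ`. -/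
noncomputable def centroid {d : ℕ} (μ : Measure (EuclideanSpace ℝ (Fin d)))
    (L : Set (EuclideanSpace ℝ (Fin d))) : EuclideanSpace ℝ (Fin d) :=
  (μ L).toReal⁻¹ • ∫ x in L, x ∂μ

theorem sq_norm_diff {d : ℕ} (a b : EuclideanSpace ℝ (Fin d)) :
    ‖a‖^2 - ‖b‖^2 = ⟪a+b, a-b⟫_ℝ := by
  rw [inner_add_left, inner_sub_right, inner_sub_right, real_inner_self_eq_norm_sq,
    real_inner_self_eq_norm_sq, real_inner_comm b a]
  ring

theorem halfspace_meas {d : ℕ} (K : Set (EuclideanSpace ℝ (Fin d))) (hKcomp : IsCompact K)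
    (ξ : EuclideanSpace ℝ (Fin d)) (a : ℝ) :
    MeasurableSet (K ∩ {p | ⟪p, ξ⟫_ℝ ≤ a}) :=
  hKcomp.isClosed.measurableSet.inter
    (measurableSet_le ((continuous_id.inner continuous_const).measurable) measurable_const)


theorem slab_vol (d : ℕ) (hd : 1 ≤ d) (ξ : EuclideanSpace ℝ (Fin d)) (hξ : ‖ξ‖ = 1)
    (c w M : ℝ) (S : Set (EuclideanSpace ℝ (Fin d)))
    (hS : S ⊆ {x | ‖x‖ ≤ M ∧ |⟪x, ξ⟫_ℝ - c| ≤ w}) :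
    volume S ≤ ENNReal.ofReal (2*w) * (ENNReal.ofReal (2*M))^(d-1) := by
  set i₀ : Fin d := ⟨0, hd⟩ with hi₀
  have hcard : Module.finrank ℝ (EuclideanSpace ℝ (Fin d)) = Fintype.card (Fin d) := by
    simp [finrank_euclideanSpace]
  have horth : Orthonormal ℝ (({i₀} : Set (Fin d)).restrict (fun _ => ξ)) := by
    rw [orthonormal_iff_ite]
    rintro ⟨i, hi⟩ ⟨j, hj⟩
    simp only [Set.mem_singleton_iff] at hi hj
    have heq : (⟨i, hi⟩ : ({i₀} : Set (Fin d))) = ⟨j, hj⟩ := by subst hi; subst hj; rfl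
    rw [if_pos heq]
    show ⟪ξ, ξ⟫_ℝ = 1
    rw [real_inner_self_eq_norm_sq, hξ]; norm_num
  obtain ⟨b, hb⟩ := horth.exists_orthonormalBasis_extension_of_card_eq hcard
  have hbξ : b i₀ = ξ := hb i₀ rfl
  set lo : Fin d → ℝ := fun i => if i = i₀ then c-w else -M with hlo
  set hi : Fin d → ℝ := fun i => if i = i₀ then c+w else M with hhi
  set I : Fin d → Set ℝ := fun i => Set.Icc (lo i) (hi i) with hI
  have hIi₀ : I i₀ = Set.Icc (c-w) (c+w) := by simp [hI, hlo, hhi]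
  have hIne : ∀ i, i ≠ i₀ → I i = Set.Icc (-M) M := by
    intro i h; simp [hI, hlo, hhi, h]
  have hsub : S ⊆ ⇑b.repr ⁻¹' ((MeasurableEquiv.toLp 2 (Fin d → ℝ)).symm ⁻¹' Set.pi Set.univ I) := by
    intro x hx
    obtain ⟨hxM, hxw⟩ := hS hx
    intro i _
    show b.repr x i ∈ I i
    have hrepr : b.repr x i = ⟪b i, x⟫_ℝ := b.repr_apply_apply x i
    by_cases h : i = i₀
    · subst h
      rw [hIi₀, hrepr, hbξ, real_inner_comm]
      constructor <;> [linarith [(abs_le.1 hxw).1]; linarith [(abs_le.1 hxw).2]]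
    · rw [hIne i h]
      have h2 : |⟪b i, x⟫_ℝ| ≤ ‖b i‖ * ‖x‖ := abs_real_inner_le_norm _ _
      rw [b.orthonormal.1 i, one_mul] at h2
      rw [hrepr]
      constructor <;> [linarith [(abs_le.1 (h2.trans hxM)).1]; linarith [(abs_le.1 (h2.trans hxM)).2]]
  calc volume S ≤ volume (⇑b.repr ⁻¹' ((MeasurableEquiv.toLp 2 (Fin d → ℝ)).symm ⁻¹' Set.pi Set.univ I)) :=
        measure_mono hsub
    _ = volume ((MeasurableEquiv.toLp 2 (Fin d → ℝ)).symm ⁻¹' Set.pi Set.univ I) := by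
        rw [b.measurePreserving_repr.measure_preimage]
        exact ((MeasurableEquiv.toLp 2 (Fin d → ℝ)).symm.measurable (MeasurableSet.univ_pi
          (fun i => measurableSet_Icc))).nullMeasurableSet
    _ = volume (Set.pi Set.univ I) := by
        rw [(EuclideanSpace.volume_preserving_symm_measurableEquiv_toLp (Fin d)).measure_preimage]
        exact (MeasurableSet.univ_pi (fun i => measurableSet_Icc)).nullMeasurableSet
    _ = ∏ i, volume (I i) := volume_pi_pi I
    _ = volume (I i₀) * ∏ i ∈ Finset.univ.erase i₀, volume (I i) :=
        (Finset.mul_prod_erase Finset.univ _ (Finset.mem_univ i₀)).symm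
    _ ≤ ENNReal.ofReal (2*w) * (ENNReal.ofReal (2*M))^(d-1) := by
        have h1 : volume (I i₀) = ENNReal.ofReal (2*w) := by
          rw [hIi₀, Real.volume_Icc]; congr 1; ring
        have h2 : ∏ i ∈ Finset.univ.erase i₀, volume (I i) = (ENNReal.ofReal (2*M))^(d-1) := by
          rw [Finset.prod_congr rfl (fun i hi => ?_), Finset.prod_const,
            Finset.card_erase_of_mem (Finset.mem_univ i₀), Finset.card_univ, Fintype.card_fin]
          rw [hIne i (Finset.ne_of_mem_erase hi), Real.volume_Icc]
          congr 1; ring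
        rw [h1, h2]

theorem exists_unit_orth (d : ℕ) (hd : 2 ≤ d) (ξ : EuclideanSpace ℝ (Fin d)) (hξ : ‖ξ‖ = 1) :
    ∃ v : EuclideanSpace ℝ (Fin d), ‖v‖ = 1 ∧ ⟪ξ, v⟫_ℝ = 0 := by
  have hd1 : 0 < d := by omega
  set i₀ : Fin d := ⟨0, hd1⟩ with hi₀
  have hcard : Module.finrank ℝ (EuclideanSpace ℝ (Fin d)) = Fintype.card (Fin d) := by
    simp [finrank_euclideanSpace]
  have horth : Orthonormal ℝ (({i₀} : Set (Fin d)).restrict (fun _ => ξ)) := by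
    rw [orthonormal_iff_ite]
    rintro ⟨i, hi⟩ ⟨j, hj⟩
    simp only [Set.mem_singleton_iff] at hi hj
    have heq : (⟨i, hi⟩ : ({i₀} : Set (Fin d))) = ⟨j, hj⟩ := by subst hi; subst hj; rfl
    rw [if_pos heq]
    show ⟪ξ, ξ⟫_ℝ = 1
    rw [real_inner_self_eq_norm_sq, hξ]; norm_num
  obtain ⟨b, hb⟩ := horth.exists_orthonormalBasis_extension_of_card_eq hcard
  have hbξ : b i₀ = ξ := hb i₀ rfl
  set i₁ : Fin d := ⟨1, by omega⟩ with hi₁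
  refine ⟨b i₁, b.orthonormal.1 i₁, ?_⟩
  rw [← hbξ]
  exact b.orthonormal.2 (by simp [hi₀, hi₁, Fin.ext_iff])

theorem sphere_chain (d : ℕ) (hd : 2 ≤ d) (F : EuclideanSpace ℝ (Fin d) → ℝ) (L : ℝ) (hL : 0 ≤ L)
    (hF : ∀ ξ η, ‖ξ‖ = 1 → ‖η‖ = 1 → |F ξ - F η| ≤ L * ‖ξ - η‖^2) :
    ∀ ξ η, ‖ξ‖ = 1 → ‖η‖ = 1 → F ξ = F η := by
  have lipsin : LipschitzWith 1 Real.sin := by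
    apply lipschitzWith_of_nnnorm_deriv_le Real.differentiable_sin
    intro x; rw [Real.deriv_sin]
    simpa [← NNReal.coe_le_coe] using Real.abs_cos_le_one x
  have lipcos : LipschitzWith 1 Real.cos := by
    apply lipschitzWith_of_nnnorm_deriv_le Real.differentiable_cos
    intro x; rw [Real.deriv_cos]
    simpa [← NNReal.coe_le_coe, abs_neg] using Real.abs_sin_le_one x
  intro ξ η hξ hη
  obtain ⟨v₀, hv₀, hv₀ξ⟩ := exists_unit_orth d hd ξ hξ
  set c : ℝ := ⟪ξ, η⟫_ℝ with hc
  have hc1 : |c| ≤ 1 := by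
    have := abs_real_inner_le_norm ξ η
    rwa [hξ, hη, one_mul] at this
  set w : EuclideanSpace ℝ (Fin d) := η - c • ξ with hw
  have hcc : ⟪η, ξ⟫_ℝ = c := by rw [hc, real_inner_comm]
  have hwsq : ‖w‖^2 = 1 - c^2 := by
    rw [hw, @norm_sub_sq_real, real_inner_smul_right, hcc, norm_smul, hξ, hη]
    simp only [Real.norm_eq_abs, mul_one]
    rw [sq_abs]; ring
  obtain ⟨v, hv, hvξ, hwv⟩ : ∃ v : EuclideanSpace ℝ (Fin d), ‖v‖ = 1 ∧ ⟪ξ, v⟫_ℝ = 0 ∧ ‖w‖ • v = w := by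
    by_cases hw0 : w = 0
    · exact ⟨v₀, hv₀, hv₀ξ, by simp [hw0]⟩
    · refine ⟨‖w‖⁻¹ • w, ?_, ?_, ?_⟩
      · rw [norm_smul]; simp [norm_ne_zero_iff.2 hw0]
      · rw [real_inner_smul_right, hw, inner_sub_right, real_inner_smul_right,
          real_inner_self_eq_norm_sq, hξ, ← hc]
        ring
      · rw [smul_smul, mul_inv_cancel₀ (norm_ne_zero_iff.2 hw0), one_smul]
  set θ : ℝ := Real.arccos c with hθ
  have hcosθ : Real.cos θ = c :=
    Real.cos_arccos (by linarith [(abs_le.1 hc1).1]) (by linarith [(abs_le.1 hc1).2])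
  have hsinθ : Real.sin θ = ‖w‖ := by
    rw [hθ, Real.sin_arccos, ← hwsq, Real.sqrt_sq (norm_nonneg w)]
  have hη' : η = Real.cos θ • ξ + Real.sin θ • v := by
    rw [hcosθ, hsinθ, hwv, hw]; abel
  have hθ0 : 0 ≤ θ := Real.arccos_nonneg c
  have hθπ : θ ≤ Real.pi := Real.arccos_le_pi c
  set γ : ℝ → EuclideanSpace ℝ (Fin d) := fun s => Real.cos s • ξ + Real.sin s • v with hγ
  have hnormsq : ∀ p q : ℝ, ‖p • ξ + q • v‖^2 = p^2 + q^2 := by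
    intro p q
    rw [@norm_add_sq_real, real_inner_smul_left, real_inner_smul_right, hvξ, norm_smul, norm_smul,
      hξ, hv]
    simp [sq_abs]
  have hγunit : ∀ s, ‖γ s‖ = 1 := by
    intro s
    have h1 : ‖γ s‖^2 = 1 := by
      rw [hγ]
      simp only []
      rw [hnormsq]
      rw [add_comm]
      exact Real.sin_sq_add_cos_sq s
    nlinarith [norm_nonneg (γ s)]
  have hγdist : ∀ a b : ℝ, ‖γ a - γ b‖^2 ≤ 2 * (a-b)^2 := by
    intro a b
    have hab : γ a - γ b = (Real.cos a - Real.cos b) • ξ + (Real.sin a - Real.sin b) • v := by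
      rw [hγ]; simp only [sub_smul]; abel
    rw [hab, hnormsq]
    have h1 : |Real.cos a - Real.cos b| ≤ |a - b| := by
      have := lipcos.dist_le_mul a b
      simpa [Real.dist_eq] using this
    have h2 : |Real.sin a - Real.sin b| ≤ |a - b| := by
      have := lipsin.dist_le_mul a b
      simpa [Real.dist_eq] using this
    have h1' : (Real.cos a - Real.cos b)^2 ≤ (a-b)^2 := by
      rw [← sq_abs (Real.cos a - Real.cos b), ← sq_abs (a-b)]
      exact pow_le_pow_left₀ (abs_nonneg _) h1 2
    have h2' : (Real.sin a - Real.sin b)^2 ≤ (a-b)^2 := by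
      rw [← sq_abs (Real.sin a - Real.sin b), ← sq_abs (a-b)]
      exact pow_le_pow_left₀ (abs_nonneg _) h2 2
    linarith
  have hγ0 : γ 0 = ξ := by rw [hγ]; simp
  have hγθ : γ θ = η := hη'.symm
  have key : ∀ n : ℕ, 0 < n → |F η - F ξ| ≤ 2 * L * Real.pi^2 / n := by
    intro n hn
    have hn' : (0:ℝ) < n := by exact_mod_cast hn
    have hstep : ∀ k : ℕ, |F (γ (((k:ℝ)+1) * (θ/n))) - F (γ (k * (θ/n)))| ≤ 2 * L * (θ/n)^2 := by
      intro k
      calc |F (γ (((k:ℝ)+1) * (θ/n))) - F (γ (k * (θ/n)))|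
          ≤ L * ‖γ (((k:ℝ)+1) * (θ/n)) - γ (k * (θ/n))‖^2 := hF _ _ (hγunit _) (hγunit _)
        _ ≤ L * (2 * (((k:ℝ)+1) * (θ/n) - k * (θ/n))^2) :=
            mul_le_mul_of_nonneg_left (hγdist _ _) hL
        _ = 2 * L * (θ/n)^2 := by ring
    have htel : F η - F ξ = ∑ k ∈ Finset.range n, (F (γ (((k:ℝ)+1) * (θ/n))) - F (γ (k * (θ/n)))) := by
      have := Finset.sum_range_sub (fun k : ℕ => F (γ ((k:ℝ) * (θ/n)))) n
      simp only [Nat.cast_add, Nat.cast_one] at this ⊢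
      rw [this]
      rw [show ((n:ℝ) * (θ/n)) = θ by field_simp, hγθ]
      simp [hγ0]
    rw [htel]
    calc |∑ k ∈ Finset.range n, (F (γ (((k:ℝ)+1) * (θ/n))) - F (γ (k * (θ/n))))|
        ≤ ∑ k ∈ Finset.range n, |F (γ (((k:ℝ)+1) * (θ/n))) - F (γ ((k:ℝ) * (θ/n)))| :=
          Finset.abs_sum_le_sum_abs _ _
      _ ≤ ∑ _k ∈ Finset.range n, 2 * L * (θ/n)^2 := Finset.sum_le_sum (fun k _ => hstep k)
      _ = n * (2 * L * (θ/n)^2) := by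
          rw [Finset.sum_const, Finset.card_range]; simp [nsmul_eq_mul]
      _ = 2 * L * θ^2 / n := by field_simp
      _ ≤ 2 * L * Real.pi^2 / n := by
          have hθ2 : θ^2 ≤ Real.pi^2 := by nlinarith [Real.pi_pos]
          gcongr
  have habs : |F η - F ξ| = 0 := by
    by_contra h
    have hpos : 0 < |F η - F ξ| := lt_of_le_of_ne (abs_nonneg _) (Ne.symm h)
    obtain ⟨n, hn⟩ := exists_nat_gt (2 * L * Real.pi^2 / |F η - F ξ|)
    have hn0 : 0 < n := by
      rcases Nat.eq_zero_or_pos n with h0 | h0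
      · exfalso
        rw [h0] at hn
        have : (0:ℝ) ≤ 2 * L * Real.pi^2 / |F η - F ξ| := by positivity
        simp at hn
        linarith
      · exact h0
    have hkey := key n hn0
    have hn' : (0:ℝ) < n := by exact_mod_cast hn0
    rw [div_lt_iff₀ hpos] at hn
    rw [le_div_iff₀ hn'] at hkey
    nlinarith
  have := abs_eq_zero.1 habs
  linarith

theorem t_lipschitz (d : ℕ) (K : Set (EuclideanSpace ℝ (Fin d))) (hKcomp : IsCompact K)
    (hKconv : Convex ℝ K) (hKint : (interior K).Nonempty)
    (δ : ℝ) (hδ : 0 < δ) (hδK : ENNReal.ofReal δ < volume K)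
    (M : ℝ) (hKM : ∀ x ∈ K, ‖x‖ ≤ M)
    (ξ η : EuclideanSpace ℝ (Fin d)) (hξ : ‖ξ‖ = 1) (hη : ‖η‖ = 1) (tξ tη : ℝ)
    (hA : volume (K ∩ {p | ⟪p, ξ⟫_ℝ ≤ tξ}) = ENNReal.ofReal δ)
    (hB : volume (K ∩ {p | ⟪p, η⟫_ℝ ≤ tη}) = ENNReal.ofReal δ) :
    tξ ≤ tη + 2 * M * ‖ξ - η‖ := by
  by_contra hcon
  push_neg at hcon
  set a : ℝ := tη + M * ‖ξ - η‖ with ha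
  have hMnn : 0 ≤ M := by
    obtain ⟨x, hx⟩ := hKint
    exact le_trans (norm_nonneg x) (hKM x (interior_subset hx))
  have hat : a < tξ := by
    have : 0 ≤ M * ‖ξ - η‖ := by positivity
    nlinarith [norm_nonneg (ξ - η)]
  set A := K ∩ {p | ⟪p, ξ⟫_ℝ ≤ tξ} with hAdef
  set S := K ∩ {p | ⟪p, ξ⟫_ℝ ≤ a} with hSdef
  have hBsub : K ∩ {p | ⟪p, η⟫_ℝ ≤ tη} ⊆ S := by
    rintro x ⟨hxK, hxη⟩
    refine ⟨hxK, ?_⟩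
    have h1 : ⟪x, ξ - η⟫_ℝ ≤ ‖x‖ * ‖ξ - η‖ := real_inner_le_norm x (ξ - η)
    have h2 : ⟪x, ξ - η⟫_ℝ = ⟪x, ξ⟫_ℝ - ⟪x, η⟫_ℝ := inner_sub_right x ξ η
    have h3 : ‖x‖ * ‖ξ - η‖ ≤ M * ‖ξ - η‖ :=
      mul_le_mul_of_nonneg_right (hKM x hxK) (norm_nonneg _)
    show ⟪x, ξ⟫_ℝ ≤ a
    simp only [Set.mem_setOf_eq] at hxη
    rw [ha]; linarith
  have hSA : S ⊆ A := fun x ⟨hxK, hxa⟩ => ⟨hxK, le_trans hxa hat.le⟩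
  have hSmeas : MeasurableSet S := halfspace_meas K hKcomp ξ a
  have hSvol : volume S = ENNReal.ofReal δ := by
    apply le_antisymm
    · rw [← hA]; exact measure_mono hSA
    · rw [← hB]; exact measure_mono hBsub
  have hdiff0 : volume (A \ S) = 0 := by
    rw [measure_diff hSA hSmeas.nullMeasurableSet (by rw [hSvol]; exact ENNReal.ofReal_ne_top),
      hA, hSvol, tsub_self]
  -- get witnesses
  have hSne : S.Nonempty := by
    apply nonempty_of_measure_ne_zero (μ := volume)
    rw [hSvol]
    exact (ENNReal.ofReal_pos.2 hδ).ne'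
  obtain ⟨u, huK, hua⟩ := hSne
  have hvex : ∃ v ∈ K, tξ < ⟪v, ξ⟫_ℝ := by
    by_contra hc
    push_neg at hc
    have : K ⊆ A := fun x hx => ⟨hx, hc x hx⟩
    exact absurd (le_trans (measure_mono this) hA.le) (not_le.2 hδK)
  obtain ⟨v, hvK, hvξ⟩ := hvex
  simp only [Set.mem_setOf_eq] at hua
  set c : ℝ := (a + tξ) / 2 with hc
  have hac : a < c := by rw [hc]; linarith
  have hct : c < tξ := by rw [hc]; linarith
  have hden : 0 < ⟪v, ξ⟫_ℝ - ⟪u, ξ⟫_ℝ := by linarith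
  set τ : ℝ := (c - ⟪u, ξ⟫_ℝ) / (⟪v, ξ⟫_ℝ - ⟪u, ξ⟫_ℝ) with hτ
  have hτ0 : 0 ≤ τ := div_nonneg (by linarith) hden.le
  have hτ1 : τ ≤ 1 := by
    rw [hτ, div_le_one hden]; linarith
  set y := (1 - τ) • u + τ • v with hy
  have hyK : y ∈ K := hKconv huK hvK (by linarith) hτ0 (by ring)
  have halg : ∀ pu pv cc : ℝ, pv - pu ≠ 0 →
      (1 - (cc - pu)/(pv - pu)) * pu + (cc - pu)/(pv - pu) * pv = cc := by
    intro pu pv cc hne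
    field_simp
    ring
  have hyc : ⟪y, ξ⟫_ℝ = c := by
    rw [hy, inner_add_left, real_inner_smul_left, real_inner_smul_left, hτ]
    exact halg _ _ _ hden.ne'
  obtain ⟨w₀, hw₀⟩ := hKint
  set X : ℝ := |⟪w₀, ξ⟫_ℝ - c| with hX
  have hXnn : 0 ≤ X := abs_nonneg _
  set s : ℝ := (c - a) / (2 * (X + (c - a))) with hs
  have hs0 : 0 < s := by
    apply div_pos (by linarith)
    nlinarith
  have hs1 : s < 1 := by
    rw [hs, div_lt_one (by nlinarith)]
    nlinarith
  have hsX : s * X < c - a := by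
    have h2 : s * X ≤ (c-a)/2 := by
      rw [hs, div_mul_eq_mul_div, div_le_div_iff₀ (by nlinarith) (by norm_num : (0:ℝ) < 2)]
      nlinarith
    linarith
  set z := s • w₀ + (1 - s) • y with hz
  have hzint : z ∈ interior K := by
    rw [hz]
    exact hKconv.combo_interior_self_mem_interior hw₀ hyK hs0 (by linarith) (by ring)
  have hzc : |⟪z, ξ⟫_ℝ - c| < c - a := by
    rw [hz, inner_add_left, real_inner_smul_left, real_inner_smul_left, hyc]
    have heq : s * ⟪w₀, ξ⟫_ℝ + (1 - s) * c - c = s * (⟪w₀, ξ⟫_ℝ - c) := by ring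
    rw [heq, abs_mul, abs_of_pos hs0]
    exact lt_of_le_of_lt (by rw [hX]) hsX
  have hza : a < ⟪z, ξ⟫_ℝ := by
    have := (abs_lt.1 hzc).1; linarith
  have hzt : ⟪z, ξ⟫_ℝ < tξ := by
    have := (abs_lt.1 hzc).2
    have hcc : c + (c - a) = tξ := by rw [hc]; ring
    linarith
  obtain ⟨r, hr0, hball⟩ : ∃ r > 0, ball z r ⊆ K := by
    rw [mem_interior_iff_mem_nhds, Metric.mem_nhds_iff] at hzint
    obtain ⟨r, hr0, hr⟩ := hzint
    exact ⟨r, hr0, hr⟩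
  set r' : ℝ := min r (min (tξ - ⟪z, ξ⟫_ℝ) (⟪z, ξ⟫_ℝ - a)) with hr'
  have hr'0 : 0 < r' := lt_min hr0 (lt_min (by linarith) (by linarith))
  have hball' : ball z r' ⊆ A \ S := by
    intro x hx
    have hxz : ‖x - z‖ < r' := by
      rw [← dist_eq_norm]; exact mem_ball.1 hx
    have hxK : x ∈ K := hball (mem_ball.2 (lt_of_lt_of_le (mem_ball.1 hx) (min_le_left _ _)))
    have hinn : |⟪x, ξ⟫_ℝ - ⟪z, ξ⟫_ℝ| ≤ ‖x - z‖ := by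
      have h1 : ⟪x, ξ⟫_ℝ - ⟪z, ξ⟫_ℝ = ⟪x - z, ξ⟫_ℝ := (inner_sub_left x z ξ).symm
      rw [h1]
      have := abs_real_inner_le_norm (x - z) ξ
      rwa [hξ, mul_one] at this
    have h2 : ‖x - z‖ < tξ - ⟪z, ξ⟫_ℝ :=
      lt_of_lt_of_le hxz (le_trans (min_le_right _ _) (min_le_left _ _))
    have h3 : ‖x - z‖ < ⟪z, ξ⟫_ℝ - a :=
      lt_of_lt_of_le hxz (le_trans (min_le_right _ _) (min_le_right _ _))
    constructor
    · refine ⟨hxK, ?_⟩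
      show ⟪x, ξ⟫_ℝ ≤ tξ
      have h4 := (abs_le.1 hinn).2
      linarith
    · intro hxS
      have hxa : ⟪x, ξ⟫_ℝ ≤ a := hxS.2
      have := (abs_lt.1 (lt_of_le_of_lt hinn h3)).1
      linarith
  have : (0:ℝ≥0∞) < volume (A \ S) :=
    lt_of_lt_of_le (measure_ball_pos volume z hr'0) (measure_mono hball')
  rw [hdiff0] at this
  exact lt_irrefl _ this

theorem inner_centroid_diff_bound (d : ℕ) (hd : 1 ≤ d)
    (K : Set (EuclideanSpace ℝ (Fin d))) (hKcomp : IsCompact K)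
    (δ : ℝ) (hδ : 0 < δ)
    (M : ℝ) (hM : 0 < M) (hKM : ∀ x ∈ K, ‖x‖ ≤ M)
    (ξ η : EuclideanSpace ℝ (Fin d)) (hξ : ‖ξ‖ = 1) (hη : ‖η‖ = 1) (tξ tη : ℝ)
    (hA : volume (K ∩ {p | ⟪p, ξ⟫_ℝ ≤ tξ}) = ENNReal.ofReal δ)
    (hB : volume (K ∩ {p | ⟪p, η⟫_ℝ ≤ tη}) = ENNReal.ofReal δ)
    (hlip1 : tξ ≤ tη + 2 * M * ‖ξ - η‖) (hlip2 : tη ≤ tξ + 2 * M * ‖ξ - η‖) :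
    |⟪centroid volume (K ∩ {p | ⟪p, ξ⟫_ℝ ≤ tξ}) - centroid volume (K ∩ {p | ⟪p, η⟫_ℝ ≤ tη}), ξ⟫_ℝ|
      ≤ (36 * M^2 * (2*M)^(d-1) / δ) * ‖ξ - η‖^2 := by
  set A := K ∩ {p | ⟪p, ξ⟫_ℝ ≤ tξ} with hAdef
  set B := K ∩ {p | ⟪p, η⟫_ℝ ≤ tη} with hBdef
  have hAm : MeasurableSet A := halfspace_meas K hKcomp ξ tξ
  have hBm : MeasurableSet B := halfspace_meas K hKcomp η tη
  have hAfin : volume A ≠ ∞ := by rw [hA]; exact ENNReal.ofReal_ne_top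
  have hBfin : volume B ≠ ∞ := by rw [hB]; exact ENNReal.ofReal_ne_top
  set e : ℝ := ‖ξ - η‖ with he
  have he0 : 0 ≤ e := norm_nonneg _
  -- pointwise inner product comparison
  have hcomp : ∀ x : EuclideanSpace ℝ (Fin d), x ∈ K → |⟪x, ξ⟫_ℝ - ⟪x, η⟫_ℝ| ≤ M * e := by
    intro x hx
    have h1 : ⟪x, ξ⟫_ℝ - ⟪x, η⟫_ℝ = ⟪x, ξ - η⟫_ℝ := (inner_sub_right x ξ η).symm
    rw [h1]
    calc |⟪x, ξ - η⟫_ℝ| ≤ ‖x‖ * ‖ξ - η‖ := abs_real_inner_le_norm _ _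
      _ ≤ M * e := mul_le_mul_of_nonneg_right (hKM x hx) he0
  -- symmetric differences are in the slab
  have hslabAB : A \ B ⊆ {x | ‖x‖ ≤ M ∧ |⟪x, ξ⟫_ℝ - tξ| ≤ 3 * M * e} := by
    rintro x ⟨⟨hxK, hxξ⟩, hxB⟩
    simp only [Set.mem_setOf_eq] at hxξ
    have hxη : tη < ⟪x, η⟫_ℝ := by
      by_contra hcc
      push_neg at hcc
      exact hxB ⟨hxK, hcc⟩
    have hc := abs_le.1 (hcomp x hxK)
    refine ⟨hKM x hxK, abs_le.2 ⟨by linarith, by linarith⟩⟩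
  have hslabBA : B \ A ⊆ {x | ‖x‖ ≤ M ∧ |⟪x, ξ⟫_ℝ - tξ| ≤ 3 * M * e} := by
    rintro x ⟨⟨hxK, hxη⟩, hxA⟩
    simp only [Set.mem_setOf_eq] at hxη
    have hxξ : tξ < ⟪x, ξ⟫_ℝ := by
      by_contra hcc
      push_neg at hcc
      exact hxA ⟨hxK, hcc⟩
    have hc := abs_le.1 (hcomp x hxK)
    refine ⟨hKM x hxK, abs_le.2 ⟨by linarith, by linarith⟩⟩
  -- volume bound for symmetric difference pieces
  have hW : ∀ S : Set (EuclideanSpace ℝ (Fin d)),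
      S ⊆ {x | ‖x‖ ≤ M ∧ |⟪x, ξ⟫_ℝ - tξ| ≤ 3 * M * e} →
      (volume S).toReal ≤ 6 * M * e * (2*M)^(d-1) := by
    intro S hS
    have h1 := slab_vol d hd ξ hξ tξ (3*M*e) M S hS
    have h2 : ENNReal.ofReal (2*(3*M*e)) * (ENNReal.ofReal (2*M))^(d-1)
        = ENNReal.ofReal (6 * M * e * (2*M)^(d-1)) := by
      rw [← ENNReal.ofReal_pow (by positivity), ← ENNReal.ofReal_mul (by positivity)]
      ring_nf
    rw [h2] at h1
    exact ENNReal.toReal_le_of_le_ofReal (by positivity) h1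
  -- measures of the two difference pieces agree
  have hABBA : volume (A \ B) = volume (B \ A) := by
    have h1 : volume (A ∩ B) + volume (A \ B) = volume A := measure_inter_add_diff A hBm
    have h2 : volume (B ∩ A) + volume (B \ A) = volume B := measure_inter_add_diff B hAm
    rw [Set.inter_comm B A] at h2
    have hfin : volume (A ∩ B) ≠ ∞ :=
      fun hcc => hAfin (top_le_iff.1 (hcc ▸ measure_mono Set.inter_subset_left))
    have := h1.trans (hA.trans (hB.symm.trans h2.symm))
    exact (ENNReal.add_right_inj hfin).1 this
  set r : ℝ := (volume (A \ B)).toReal with hr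
  have hr' : (volume (B \ A)).toReal = r := by rw [hr, hABBA]
  have hrW : r ≤ 6 * M * e * (2*M)^(d-1) := hW _ hslabAB
  have hr0 : 0 ≤ r := ENNReal.toReal_nonneg
  -- integrability
  have hABK : A ∪ B ⊆ K := Set.union_subset Set.inter_subset_left Set.inter_subset_left
  have hunion_fin : volume (A ∪ B) < ∞ :=
    lt_of_le_of_lt (measure_union_le A B)
      (by rw [hA, hB]; exact ENNReal.add_lt_top.2 ⟨ENNReal.ofReal_lt_top, ENNReal.ofReal_lt_top⟩)
  have hvolfin : ∀ S : Set (EuclideanSpace ℝ (Fin d)), S ⊆ A ∪ B → volume S ≠ ∞ :=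
    fun S hS => (lt_of_le_of_lt (measure_mono hS) hunion_fin).ne
  have hid_int : ∀ S : Set (EuclideanSpace ℝ (Fin d)), MeasurableSet S → S ⊆ A ∪ B →
      IntegrableOn (fun x => x) S volume := by
    intro S hSm hS
    have hbdd : ∀ᵐ x ∂(volume.restrict S), ‖x‖ ≤ M :=
      Filter.Eventually.mono (ae_restrict_mem hSm) (fun x hx => hKM x (hABK (hS hx)))
    exact Measure.integrableOn_of_bounded (hvolfin S hS) continuous_id.aestronglyMeasurable hbdd
  have hf_int : ∀ S : Set (EuclideanSpace ℝ (Fin d)), MeasurableSet S → S ⊆ A ∪ B →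
      IntegrableOn (fun x => ⟪x, ξ⟫_ℝ) S volume := by
    intro S hSm hS
    have hbdd : ∀ᵐ x ∂(volume.restrict S), ‖⟪x, ξ⟫_ℝ‖ ≤ M := by
      refine Filter.Eventually.mono (ae_restrict_mem hSm) (fun x hx => ?_)
      have h1 := abs_real_inner_le_norm x ξ
      rw [hξ, mul_one] at h1
      exact le_trans h1 (hKM x (hABK (hS hx)))
    exact Measure.integrableOn_of_bounded (hvolfin S hS)
      (continuous_id.inner continuous_const).aestronglyMeasurable hbdd
  -- split the integrals
  have hsplit : ∀ (S T : Set (EuclideanSpace ℝ (Fin d))), MeasurableSet S → MeasurableSet T →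
      S ⊆ A ∪ B → T ⊆ A ∪ B →
      ∫ x in S, ⟪x, ξ⟫_ℝ = (∫ x in S \ T, ⟪x, ξ⟫_ℝ) + ∫ x in S ∩ T, ⟪x, ξ⟫_ℝ := by
    intro S T hSm hTm hSsub hTsub
    have hdisj : Disjoint (S \ T) (S ∩ T) :=
      Set.disjoint_sdiff_left.mono_right Set.inter_subset_right
    have h1 := setIntegral_union hdisj (hSm.inter hTm)
      (hf_int _ (hSm.diff hTm) (fun x hx => hSsub hx.1))
      (hf_int _ (hSm.inter hTm) (fun x hx => hSsub hx.1))
    rw [Set.diff_union_inter] at h1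
    exact h1
  have hIdiff : (∫ x in A, ⟪x, ξ⟫_ℝ) - ∫ x in B, ⟪x, ξ⟫_ℝ
      = (∫ x in A \ B, ⟪x, ξ⟫_ℝ) - ∫ x in B \ A, ⟪x, ξ⟫_ℝ := by
    rw [hsplit A B hAm hBm Set.subset_union_left Set.subset_union_right,
      hsplit B A hBm hAm Set.subset_union_right Set.subset_union_left, Set.inter_comm B A]
    ring
  -- subtract the constant tξ
  have hconst : ∀ S : Set (EuclideanSpace ℝ (Fin d)), MeasurableSet S → S ⊆ A ∪ B →
      ∫ x in S, ⟪x, ξ⟫_ℝ = (∫ x in S, (⟪x, ξ⟫_ℝ - tξ)) + tξ * (volume S).toReal := by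
    intro S hSm hS
    rw [integral_sub (hf_int S hSm hS) (integrableOn_const (hvolfin S hS)),
      setIntegral_const]
    simp [smul_eq_mul, Measure.real]
    ring
  have hbound : ∀ S : Set (EuclideanSpace ℝ (Fin d)), MeasurableSet S → S ⊆ A ∪ B →
      S ⊆ {x | ‖x‖ ≤ M ∧ |⟪x, ξ⟫_ℝ - tξ| ≤ 3 * M * e} →
      |∫ x in S, (⟪x, ξ⟫_ℝ - tξ)| ≤ 3 * M * e * (volume S).toReal := by
    intro S hSm hS hSslab
    have := norm_setIntegral_le_of_norm_le_const (lt_top_iff_ne_top.2 (hvolfin S hS))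
      (fun x hx => (hSslab hx).2) (f := fun x => ⟪x, ξ⟫_ℝ - tξ)
    simpa [Real.norm_eq_abs, Measure.real] using this
  -- the main integral estimate
  have hmain : |(∫ x in A, ⟪x, ξ⟫_ℝ) - ∫ x in B, ⟪x, ξ⟫_ℝ| ≤ 6 * M * e * r := by
    rw [hIdiff, hconst _ (hAm.diff hBm) (fun x hx => Set.subset_union_left hx.1),
      hconst _ (hBm.diff hAm) (fun x hx => Set.subset_union_right hx.1), ← hr, hr']
    have h1 := hbound _ (hAm.diff hBm) (fun x hx => Set.subset_union_left hx.1) hslabAB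
    have h2 := hbound _ (hBm.diff hAm) (fun x hx => Set.subset_union_right hx.1) hslabBA
    rw [← hr] at h1
    rw [hr'] at h2
    have : (∫ x in A \ B, (⟪x, ξ⟫_ℝ - tξ)) + tξ * r - ((∫ x in B \ A, (⟪x, ξ⟫_ℝ - tξ)) + tξ * r)
        = (∫ x in A \ B, (⟪x, ξ⟫_ℝ - tξ)) - ∫ x in B \ A, (⟪x, ξ⟫_ℝ - tξ) := by ring
    rw [this]
    calc |(∫ x in A \ B, (⟪x, ξ⟫_ℝ - tξ)) - ∫ x in B \ A, (⟪x, ξ⟫_ℝ - tξ)|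
        ≤ |∫ x in A \ B, (⟪x, ξ⟫_ℝ - tξ)| + |∫ x in B \ A, (⟪x, ξ⟫_ℝ - tξ)| := abs_sub _ _
      _ ≤ 3 * M * e * r + 3 * M * e * r := add_le_add h1 h2
      _ = 6 * M * e * r := by ring
  -- relate to centroids
  have hcent : ⟪centroid volume A - centroid volume B, ξ⟫_ℝ
      = δ⁻¹ * ((∫ x in A, ⟪x, ξ⟫_ℝ) - ∫ x in B, ⟪x, ξ⟫_ℝ) := by
    have htoA : (volume A).toReal = δ := by rw [hA, ENNReal.toReal_ofReal hδ.le]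
    have htoB : (volume B).toReal = δ := by rw [hB, ENNReal.toReal_ofReal hδ.le]
    have hinner : ∀ S : Set (EuclideanSpace ℝ (Fin d)), MeasurableSet S → S ⊆ A ∪ B →
        ⟪(∫ x in S, x), ξ⟫_ℝ = ∫ x in S, ⟪x, ξ⟫_ℝ := by
      intro S hSm hS
      rw [real_inner_comm]
      rw [← integral_inner (hid_int S hSm hS) ξ]
      congr 1
      ext x
      exact real_inner_comm x ξ
    rw [centroid, centroid, htoA, htoB, inner_sub_left, real_inner_smul_left, real_inner_smul_left,
      hinner A hAm Set.subset_union_left, hinner B hBm Set.subset_union_right]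
    ring
  rw [hcent, abs_mul, abs_of_pos (inv_pos.2 hδ)]
  calc δ⁻¹ * |(∫ x in A, ⟪x, ξ⟫_ℝ) - ∫ x in B, ⟪x, ξ⟫_ℝ| ≤ δ⁻¹ * (6 * M * e * r) :=
        mul_le_mul_of_nonneg_left hmain (inv_pos.2 hδ).le
    _ ≤ δ⁻¹ * (6 * M * e * (6 * M * e * (2*M)^(d-1))) := by
        apply mul_le_mul_of_nonneg_left ?_ (inv_pos.2 hδ).le
        apply mul_le_mul_of_nonneg_left hrW (by positivity)
    _ = (36 * M^2 * (2*M)^(d-1) / δ) * ‖ξ - η‖^2 := by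
        rw [← he]
        field_simp
        ring

theorem surface_of_centers_is_sphere
    (d : ℕ) (hd : 2 ≤ d)
    (K : Set (EuclideanSpace ℝ (Fin d)))
    (hKcomp : IsCompact K) (hKconv : Convex ℝ K) (hKint : (interior K).Nonempty)
    (δ : ℝ) (hδ : 0 < δ) (hδK : ENNReal.ofReal δ < volume K)
    (t : EuclideanSpace ℝ (Fin d) → ℝ)
    (ht : ∀ ξ : EuclideanSpace ℝ (Fin d), ‖ξ‖ = 1 →
      volume (K ∩ {p | ⟪p, ξ⟫_ℝ ≤ t ξ}) = ENNReal.ofReal δ)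
    (hfloat : ∀ ξ : EuclideanSpace ℝ (Fin d), ‖ξ‖ = 1 →
      ∃ s : ℝ, centroid volume K - centroid volume (K ∩ {p | ⟪p, ξ⟫_ℝ ≤ t ξ}) = s • ξ) :
    ∃ R : ℝ, 0 ≤ R ∧ ∀ ξ : EuclideanSpace ℝ (Fin d), ‖ξ‖ = 1 →
      ‖centroid volume (K ∩ {p | ⟪p, ξ⟫_ℝ ≤ t ξ}) - centroid volume K‖ = R := by
  have hd1 : 1 ≤ d := by omega
  -- bound for K
  obtain ⟨M₀, hM₀⟩ := hKcomp.isBounded.subset_closedBall 0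
  set M : ℝ := max M₀ 1 with hMdef
  have hM : 0 < M := lt_of_lt_of_le one_pos (le_max_right _ _)
  have hKM : ∀ x ∈ K, ‖x‖ ≤ M := by
    intro x hx
    have := hM₀ hx
    rw [mem_closedBall, dist_zero_right] at this
    exact le_trans this (le_max_left _ _)
  set C := centroid volume K with hC
  set g : EuclideanSpace ℝ (Fin d) → EuclideanSpace ℝ (Fin d) :=
    fun ξ => centroid volume (K ∩ {p | ⟪p, ξ⟫_ℝ ≤ t ξ}) with hg
  -- norms of the centroids are bounded by M
  have hKfin : volume K ≠ ∞ := hKcomp.measure_lt_top.ne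
  have hKid_int : IntegrableOn (fun x => x) K volume := by
    have hbdd : ∀ᵐ x ∂(volume.restrict K), ‖x‖ ≤ M :=
      Filter.Eventually.mono (ae_restrict_mem hKcomp.isClosed.measurableSet)
        (fun x hx => hKM x hx)
    exact Measure.integrableOn_of_bounded hKfin continuous_id.aestronglyMeasurable hbdd
  have hVK : 0 < (volume K).toReal := by
    have h1 : ENNReal.ofReal δ < volume K := hδK
    have := ENNReal.toReal_lt_toReal (ENNReal.ofReal_ne_top) hKfin |>.2 h1
    rw [ENNReal.toReal_ofReal hδ.le] at this
    linarith
  have hCle : ‖C‖ ≤ M := by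
    rw [hC, centroid, norm_smul]
    have h1 : ‖∫ x in K, x‖ ≤ M * (volume K).toReal :=
      norm_setIntegral_le_of_norm_le_const hKfin.lt_top
        (fun x hx => hKM x hx)
    rw [Real.norm_eq_abs, abs_of_nonneg (inv_nonneg.2 ENNReal.toReal_nonneg)]
    calc (volume K).toReal⁻¹ * ‖∫ x in K, x‖ ≤ (volume K).toReal⁻¹ * (M * (volume K).toReal) :=
          mul_le_mul_of_nonneg_left h1 (inv_nonneg.2 ENNReal.toReal_nonneg)
      _ = M := by field_simp
  have hgle : ∀ ξ, ‖ξ‖ = 1 → ‖g ξ‖ ≤ M := by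
    intro ξ hξ
    have hAm := halfspace_meas K hKcomp ξ (t ξ)
    have hAv := ht ξ hξ
    have hAfin : volume (K ∩ {p | ⟪p, ξ⟫_ℝ ≤ t ξ}) ≠ ∞ := by
      rw [hAv]; exact ENNReal.ofReal_ne_top
    rw [hg]
    simp only []
    rw [centroid, norm_smul]
    have h1 : ‖∫ x in K ∩ {p | ⟪p, ξ⟫_ℝ ≤ t ξ}, x‖
        ≤ M * (volume (K ∩ {p | ⟪p, ξ⟫_ℝ ≤ t ξ})).toReal :=
      norm_setIntegral_le_of_norm_le_const hAfin.lt_top (fun x hx => hKM x hx.1)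
    rw [Real.norm_eq_abs, abs_of_nonneg (inv_nonneg.2 ENNReal.toReal_nonneg)]
    rw [hAv, ENNReal.toReal_ofReal hδ.le] at h1 ⊢
    calc δ⁻¹ * ‖∫ x in K ∩ {p | ⟪p, ξ⟫_ℝ ≤ t ξ}, x‖ ≤ δ⁻¹ * (M * δ) :=
          mul_le_mul_of_nonneg_left h1 (inv_nonneg.2 hδ.le)
      _ = M := by field_simp
  -- Lipschitz bound on t
  have hlip : ∀ ξ η, ‖ξ‖ = 1 → ‖η‖ = 1 → t ξ ≤ t η + 2 * M * ‖ξ - η‖ := by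
    intro ξ η hξ hη
    exact t_lipschitz d K hKcomp hKconv hKint δ hδ hδK M hKM ξ η hξ hη (t ξ) (t η)
      (ht ξ hξ) (ht η hη)
  -- second-order bound on F
  set F : EuclideanSpace ℝ (Fin d) → ℝ := fun ξ => ‖g ξ - C‖^2 with hF
  set c₀ : ℝ := 36 * M^2 * (2*M)^(d-1) / δ with hc₀
  have hc₀0 : 0 ≤ c₀ := by positivity
  set L : ℝ := 4 * M * c₀ with hL
  have hL0 : 0 ≤ L := by positivity
  have hkey : ∀ ξ η, ‖ξ‖ = 1 → ‖η‖ = 1 → |⟪g ξ - g η, ξ⟫_ℝ| ≤ c₀ * ‖ξ - η‖^2 := by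
    intro ξ η hξ hη
    have h2 : t η ≤ t ξ + 2 * M * ‖ξ - η‖ := by
      have := hlip η ξ hη hξ
      rwa [norm_sub_rev] at this
    exact inner_centroid_diff_bound d hd1 K hKcomp δ hδ M hM hKM ξ η hξ hη (t ξ) (t η)
      (ht ξ hξ) (ht η hη) (hlip ξ η hξ hη) h2
  have hFkey : ∀ ξ η, ‖ξ‖ = 1 → ‖η‖ = 1 → |F ξ - F η| ≤ L * ‖ξ - η‖^2 := by
    intro ξ η hξ hη
    obtain ⟨s₁, hs₁⟩ := hfloat ξ hξ
    obtain ⟨s₂, hs₂⟩ := hfloat η hη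
    have hs₁M : |s₁| ≤ 2 * M := by
      have h1 : ‖C - g ξ‖ = |s₁| := by rw [hs₁, norm_smul, hξ, mul_one, Real.norm_eq_abs]
      have h2 : ‖C - g ξ‖ ≤ 2 * M := by
        calc ‖C - g ξ‖ ≤ ‖C‖ + ‖g ξ‖ := norm_sub_le _ _
          _ ≤ M + M := add_le_add hCle (hgle ξ hξ)
          _ = 2 * M := by ring
      linarith [h1 ▸ h2]
    have hs₂M : |s₂| ≤ 2 * M := by
      have h1 : ‖C - g η‖ = |s₂| := by rw [hs₂, norm_smul, hη, mul_one, Real.norm_eq_abs]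
      have h2 : ‖C - g η‖ ≤ 2 * M := by
        calc ‖C - g η‖ ≤ ‖C‖ + ‖g η‖ := norm_sub_le _ _
          _ ≤ M + M := add_le_add hCle (hgle η hη)
          _ = 2 * M := by ring
      linarith [h1 ▸ h2]
    have hgC₁ : g ξ - C = (-s₁) • ξ := by
      have : g ξ - C = -(C - g ξ) := by abel
      rw [this, hs₁, neg_smul]
    have hgC₂ : g η - C = (-s₂) • η := by
      have : g η - C = -(C - g η) := by abel
      rw [this, hs₂, neg_smul]
    have hid : F ξ - F η = ⟪(g ξ - C) + (g η - C), g ξ - g η⟫_ℝ := by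
      have e1 : g ξ - g η = (g ξ - C) - (g η - C) := by abel
      rw [hF]
      simp only []
      rw [e1]
      exact sq_norm_diff _ _
    rw [hid, hgC₁, hgC₂, inner_add_left, real_inner_smul_left, real_inner_smul_left]
    have k1 : |⟪ξ, g ξ - g η⟫_ℝ| ≤ c₀ * ‖ξ - η‖^2 := by
      rw [real_inner_comm]; exact hkey ξ η hξ hη
    have k2 : |⟪η, g ξ - g η⟫_ℝ| ≤ c₀ * ‖ξ - η‖^2 := by
      rw [real_inner_comm]
      have := hkey η ξ hη hξ
      rw [norm_sub_rev η ξ] at this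
      have e2 : |⟪g η - g ξ, η⟫_ℝ| = |⟪g ξ - g η, η⟫_ℝ| := by
        rw [show g η - g ξ = -(g ξ - g η) by abel, inner_neg_left, abs_neg]
      rwa [e2] at this
    calc |(-s₁) * ⟪ξ, g ξ - g η⟫_ℝ + (-s₂) * ⟪η, g ξ - g η⟫_ℝ|
        ≤ |(-s₁) * ⟪ξ, g ξ - g η⟫_ℝ| + |(-s₂) * ⟪η, g ξ - g η⟫_ℝ| := abs_add_le _ _
      _ = |s₁| * |⟪ξ, g ξ - g η⟫_ℝ| + |s₂| * |⟪η, g ξ - g η⟫_ℝ| := by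
          rw [abs_mul, abs_mul, abs_neg, abs_neg]
      _ ≤ (2*M) * (c₀ * ‖ξ - η‖^2) + (2*M) * (c₀ * ‖ξ - η‖^2) := by
          apply add_le_add
          · exact mul_le_mul hs₁M k1 (abs_nonneg _) (by positivity)
          · exact mul_le_mul hs₂M k2 (abs_nonneg _) (by positivity)
      _ = L * ‖ξ - η‖^2 := by rw [hL]; ring
  -- F is constant on the unit sphere
  have hconst := sphere_chain d hd F L hL0 hFkey
  -- conclude
  set ξ₀ : EuclideanSpace ℝ (Fin d) := EuclideanSpace.single (⟨0, by omega⟩ : Fin d) (1:ℝ) with hξ₀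
  have hξ₀u : ‖ξ₀‖ = 1 := by rw [hξ₀, EuclideanSpace.norm_single, norm_one]
  refine ⟨‖g ξ₀ - C‖, norm_nonneg _, fun ξ hξ => ?_⟩
  have hFeq : F ξ = F ξ₀ := hconst ξ ξ₀ hξ hξ₀u
  have : ‖g ξ - C‖^2 = ‖g ξ₀ - C‖^2 := hFeq
  calc ‖centroid volume (K ∩ {p | ⟪p, ξ⟫_ℝ ≤ t ξ}) - centroid volume K‖
      = ‖g ξ - C‖ := rfl
    _ = Real.sqrt (‖g ξ - C‖^2) := (Real.sqrt_sq (norm_nonneg _)).symm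
    _ = Real.sqrt (‖g ξ₀ - C‖^2) := by rw [this]
    _ = ‖g ξ₀ - C‖ := Real.sqrt_sq (norm_nonneg _)
end

section
/- Let d ≥ 2, let K ⊆ ℝ^d be a convex body and let δ ∈ (0, vol(K)). If the surface of centers S_δ is a sphere centered at the center of mass C(K), i.e. there exists R ≥ 0 such that ‖C_δ(ξ) − C(K)‖ = R for every unit vector ξ ∈ S^{d−1}, then K floats in equilibrium in direction ξ at level δ for every ξ ∈ S^{d−1}. -/
open MeasureTheory Metric Set Filter
open scoped InnerProductSpace ENNReal Pointwise NNReal Topology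

lemma volume_hyperplane {d : ℕ} (ξ : EuclideanSpace ℝ (Fin d)) (hξ : ‖ξ‖ = 1) (a : ℝ) :
    volume {x : EuclideanSpace ℝ (Fin d) | ⟪x, ξ⟫_ℝ = a} = 0 := by
  have hξ2 : ⟪ξ, ξ⟫_ℝ = 1 := by rw [real_inner_self_eq_norm_sq, hξ]; norm_num
  have hker : volume ((LinearMap.ker ((innerSL ℝ ξ : EuclideanSpace ℝ (Fin d) →L[ℝ] ℝ) : EuclideanSpace ℝ (Fin d) →ₗ[ℝ] ℝ) : Submodule ℝ (EuclideanSpace ℝ (Fin d))) : Set (EuclideanSpace ℝ (Fin d))) = 0 := by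
    apply Measure.addHaar_submodule
    intro h
    have hmem : ξ ∈ LinearMap.ker ((innerSL ℝ ξ : EuclideanSpace ℝ (Fin d) →L[ℝ] ℝ) : EuclideanSpace ℝ (Fin d) →ₗ[ℝ] ℝ) := h ▸ Submodule.mem_top
    rw [LinearMap.mem_ker] at hmem
    simp only [ContinuousLinearMap.coe_coe, innerSL_apply_apply] at hmem
    rw [hξ2] at hmem
    norm_num at hmem
  have hset : {x : EuclideanSpace ℝ (Fin d) | ⟪x, ξ⟫_ℝ = a} =
      (fun x => x + -(a • ξ)) ⁻¹' ((LinearMap.ker ((innerSL ℝ ξ : EuclideanSpace ℝ (Fin d) →L[ℝ] ℝ) : EuclideanSpace ℝ (Fin d) →ₗ[ℝ] ℝ) : Submodule ℝ (EuclideanSpace ℝ (Fin d))) : Set (EuclideanSpace ℝ (Fin d))) := by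
    ext x
    simp only [Set.mem_setOf_eq, Set.mem_preimage, SetLike.mem_coe, LinearMap.mem_ker,
      ContinuousLinearMap.coe_coe, innerSL_apply_apply]
    rw [inner_add_right, inner_neg_right, real_inner_smul_right, hξ2, real_inner_comm]
    constructor
    · intro h; rw [h]; ring
    · intro h; linarith
  rw [hset, measure_preimage_add_right]
  exact hker

lemma inner_centroid {d : ℕ} (L : Set (EuclideanSpace ℝ (Fin d))) (hL : IsCompact L)
    (u : EuclideanSpace ℝ (Fin d)) :
    ⟪centroid volume L, u⟫_ℝ = (volume L).toReal⁻¹ * ∫ x in L, ⟪x, u⟫_ℝ := by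
  have hint : IntegrableOn (fun x : EuclideanSpace ℝ (Fin d) => x) L volume :=
    ContinuousOn.integrableOn_compact hL continuousOn_id
  rw [centroid, real_inner_smul_left]
  congr 1
  calc ⟪∫ x in L, x, u⟫_ℝ = ⟪u, ∫ x in L, x⟫_ℝ := real_inner_comm _ _
    _ = ∫ x in L, ⟪u, x⟫_ℝ := (integral_inner hint u).symm
    _ = ∫ x in L, ⟪x, u⟫_ℝ := by simp_rw [real_inner_comm u]

lemma bathtub {d : ℕ} (K S : Set (EuclideanSpace ℝ (Fin d))) (hK : IsCompact K)
    (hS : MeasurableSet S) (hSc : IsCompact S) (hSK : S ⊆ K)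
    (u : EuclideanSpace ℝ (Fin d)) (τ : ℝ)
    (hvol : volume S = volume (K ∩ {p | ⟪p, u⟫_ℝ ≤ τ})) :
    (∫ x in K ∩ {p | ⟪p, u⟫_ℝ ≤ τ}, ⟪x, u⟫_ℝ) ≤ (∫ x in S, ⟪x, u⟫_ℝ) ∧
    ((∫ x in K ∩ {p | ⟪p, u⟫_ℝ ≤ τ}, ⟪x, u⟫_ℝ) = (∫ x in S, ⟪x, u⟫_ℝ) →
      volume (S \ (K ∩ {p | ⟪p, u⟫_ℝ ≤ τ})) = 0 ∧
      volume ((K ∩ {p | ⟪p, u⟫_ℝ ≤ τ}) \ S) = 0) := by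
  set A := K ∩ {p | ⟪p, u⟫_ℝ ≤ τ} with hAdef
  have hcont : Continuous fun x : EuclideanSpace ℝ (Fin d) => ⟪x, u⟫_ℝ :=
    continuous_id.inner continuous_const
  have hAclosed : IsClosed A := hK.isClosed.inter (isClosed_le hcont continuous_const)
  have hAc : IsCompact A := hK.inter_right (isClosed_le hcont continuous_const)
  have hA : MeasurableSet A := hAclosed.measurableSet
  have hSfin : volume S ≠ ⊤ := hSc.measure_lt_top.ne
  have hAfin : volume A ≠ ⊤ := hAc.measure_lt_top.ne
  -- equal measures of the two differences
  have hSAfin : volume (S ∩ A) ≠ ⊤ := (lt_of_le_of_lt (measure_mono inter_subset_left) hSc.measure_lt_top).ne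
  have h1 : volume (S ∩ A) + volume (S \ A) = volume S := measure_inter_add_diff S hA
  have h2 : volume (A ∩ S) + volume (A \ S) = volume A := measure_inter_add_diff A hS
  rw [Set.inter_comm A S] at h2
  have hm : volume (S \ A) = volume (A \ S) := by
    have := h1.trans (hvol.trans h2.symm)
    exact (ENNReal.add_right_inj hSAfin).mp this
  -- integrability
  have hfS : IntegrableOn (fun x => ⟪x, u⟫_ℝ) S volume :=
    ContinuousOn.integrableOn_compact hSc hcont.continuousOn
  have hfA : IntegrableOn (fun x => ⟪x, u⟫_ℝ) A volume :=
    ContinuousOn.integrableOn_compact hAc hcont.continuousOn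
  have hfSA : IntegrableOn (fun x => ⟪x, u⟫_ℝ) (S \ A) volume := hfS.mono_set diff_subset
  have hfAS : IntegrableOn (fun x => ⟪x, u⟫_ℝ) (A \ S) volume := hfA.mono_set diff_subset
  have decS : (∫ x in S ∩ A, ⟪x, u⟫_ℝ) + ∫ x in S \ A, ⟪x, u⟫_ℝ = ∫ x in S, ⟪x, u⟫_ℝ :=
    integral_inter_add_diff hA hfS
  have decA : (∫ x in A ∩ S, ⟪x, u⟫_ℝ) + ∫ x in A \ S, ⟪x, u⟫_ℝ = ∫ x in A, ⟪x, u⟫_ℝ :=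
    integral_inter_add_diff hS hfA
  rw [Set.inter_comm A S] at decA
  have hSAmeas : MeasurableSet (S \ A) := hS.diff hA
  have hASmeas : MeasurableSet (A \ S) := hA.diff hS
  have hSAfin' : volume (S \ A) ≠ ⊤ := (lt_of_le_of_lt (measure_mono diff_subset) hSc.measure_lt_top).ne
  have hASfin' : volume (A \ S) ≠ ⊤ := (lt_of_le_of_lt (measure_mono diff_subset) hAc.measure_lt_top).ne
  have hgt : ∀ x ∈ S \ A, τ < ⟪x, u⟫_ℝ := by
    intro x hx
    by_contra hle
    push_neg at hle
    exact hx.2 ⟨hSK hx.1, hle⟩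
  have lower : τ * (volume (S \ A)).toReal ≤ ∫ x in S \ A, ⟪x, u⟫_ℝ :=
    setIntegral_ge_of_const_le_real hSAmeas hSAfin' (fun x hx => (hgt x hx).le) hfSA
  have upper : (∫ x in A \ S, ⟪x, u⟫_ℝ) ≤ τ * (volume (A \ S)).toReal := by
    have := setIntegral_mono_on hfAS (integrableOn_const hASfin')
      hASmeas (fun x hx => hx.1.2)
    rwa [setIntegral_const, smul_eq_mul, mul_comm] at this
  have hmr : (volume (S \ A)).toReal = (volume (A \ S)).toReal := by rw [hm]
  have lower' : τ * (volume (A \ S)).toReal ≤ ∫ x in S \ A, ⟪x, u⟫_ℝ := by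
    rw [← hmr]; exact lower
  constructor
  · linarith
  · intro hEq
    have hIeq : (∫ x in S \ A, ⟪x, u⟫_ℝ) = τ * (volume (A \ S)).toReal := by
      linarith
    have hzero : (∫ x in S \ A, (⟪x, u⟫_ℝ - τ)) = 0 := by
      rw [integral_sub hfSA (integrableOn_const hSAfin'),
        setIntegral_const, smul_eq_mul, hIeq, measureReal_def, hmr]
      ring
    have hnonneg : 0 ≤ᶠ[ae (volume.restrict (S \ A))] fun x => ⟪x, u⟫_ℝ - τ :=
      (ae_restrict_iff' hSAmeas).2 (ae_of_all _ fun x hx => sub_nonneg.2 (hgt x hx).le)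
    have hae : (fun x => ⟪x, u⟫_ℝ - τ) =ᶠ[ae (volume.restrict (S \ A))] 0 :=
      (setIntegral_eq_zero_iff_of_nonneg_ae hnonneg
        (hfSA.sub (integrableOn_const hSAfin'))).1 hzero
    have hfalse : ∀ᵐ x ∂(volume.restrict (S \ A)), False := by
      filter_upwards [hae, ae_restrict_mem hSAmeas] with x hx hxmem
      have hx' : ⟪x, u⟫_ℝ - τ = 0 := hx
      linarith [hgt x hxmem]
    have hSA0 : volume (S \ A) = 0 := by
      have h0 : (volume.restrict (S \ A)) Set.univ = 0 := by
        rw [ae_iff] at hfalse; simpa using hfalse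
      rwa [Measure.restrict_apply_univ] at h0
    exact ⟨hSA0, hm ▸ hSA0⟩

lemma caps_parallel {d : ℕ} (K : Set (EuclideanSpace ℝ (Fin d)))
    (hKcomp : IsCompact K) (hKconv : Convex ℝ K)
    (ξ u : EuclideanSpace ℝ (Fin d)) (hξ : ‖ξ‖ = 1) (hu : ‖u‖ = 1) (a b : ℝ)
    (hpos : 0 < volume (K ∩ {p | ⟪p, ξ⟫_ℝ ≤ a}))
    (hlt : volume (K ∩ {p | ⟪p, ξ⟫_ℝ ≤ a}) < volume K)
    (h1 : volume ((K ∩ {p | ⟪p, ξ⟫_ℝ ≤ a}) \ (K ∩ {p | ⟪p, u⟫_ℝ ≤ b})) = 0)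
    (h2 : volume ((K ∩ {p | ⟪p, u⟫_ℝ ≤ b}) \ (K ∩ {p | ⟪p, ξ⟫_ℝ ≤ a})) = 0) :
    u = ξ ∨ u = -ξ := by
  by_cases hueq : u = ξ
  · exact Or.inl hueq
  by_cases huneq : u = -ξ
  · exact Or.inr huneq
  exfalso
  set S := K ∩ {p | ⟪p, ξ⟫_ℝ ≤ a} with hSdef
  set A := K ∩ {p | ⟪p, u⟫_ℝ ≤ b} with hAdef
  -- c := ⟪ξ, u⟫ < 1
  have hc : ⟪ξ, u⟫_ℝ < 1 := by
    have hle : ⟪ξ, u⟫_ℝ ≤ 1 := by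
      have h := real_inner_le_norm ξ u
      rw [hξ, hu] at h; linarith
    rcases lt_or_eq_of_le hle with h | h
    · exact h
    · exact absurd ((inner_eq_one_iff_of_norm_eq_one hξ hu).1 h).symm hueq
  have hcne : (1 : ℝ) - ⟪ξ, u⟫_ℝ ≠ 0 := by linarith
  set w := (1 - ⟪ξ, u⟫_ℝ)⁻¹ • (ξ - u) with hwdef
  have hwξ : ⟪w, ξ⟫_ℝ = 1 := by
    rw [hwdef, real_inner_smul_left, inner_sub_left, real_inner_self_eq_norm_sq, hξ,
      real_inner_comm ξ u, one_pow]
    exact inv_mul_cancel₀ hcne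
  have hwu : ⟪w, u⟫_ℝ = -1 := by
    rw [hwdef, real_inner_smul_left, inner_sub_left, real_inner_self_eq_norm_sq, hu, one_pow]
    have h' : ⟪ξ, u⟫_ℝ - 1 = -(1 - ⟪ξ, u⟫_ℝ) := by ring
    rw [h', mul_neg, inv_mul_cancel₀ hcne]
  set U := interior K with hUdef
  have hUopen : IsOpen U := isOpen_interior
  have hUconv : Convex ℝ U := hKconv.interior
  have hcontξ : Continuous fun x : EuclideanSpace ℝ (Fin d) => ⟪x, ξ⟫_ℝ :=
    continuous_id.inner continuous_const
  have hcontu : Continuous fun x : EuclideanSpace ℝ (Fin d) => ⟪x, u⟫_ℝ :=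
    continuous_id.inner continuous_const
  -- the two open "witness" sets are empty
  have hW1 : U ∩ ({x | ⟪x, ξ⟫_ℝ < a} ∩ {x | b < ⟪x, u⟫_ℝ}) = ∅ := by
    by_contra hne
    have hop : IsOpen (U ∩ ({x | ⟪x, ξ⟫_ℝ < a} ∩ {x | b < ⟪x, u⟫_ℝ})) :=
      hUopen.inter ((isOpen_lt hcontξ continuous_const).inter
        (isOpen_lt continuous_const hcontu))
    have hsub : U ∩ ({x | ⟪x, ξ⟫_ℝ < a} ∩ {x | b < ⟪x, u⟫_ℝ}) ⊆ S \ A := by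
      rintro x ⟨hxU, hx1, hx2⟩
      have hx1' : ⟪x, ξ⟫_ℝ < a := hx1
      have hx2' : b < ⟪x, u⟫_ℝ := hx2
      refine ⟨⟨interior_subset hxU, ?_⟩, fun hxA => ?_⟩
      · exact le_of_lt hx1'
      · have hxb : ⟪x, u⟫_ℝ ≤ b := hxA.2
        linarith
    exact (hop.measure_pos volume (Set.nonempty_iff_ne_empty.2 hne)).ne'
      (measure_mono_null hsub h1)
  have hW2 : U ∩ ({x | a < ⟪x, ξ⟫_ℝ} ∩ {x | ⟪x, u⟫_ℝ < b}) = ∅ := by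
    by_contra hne
    have hop : IsOpen (U ∩ ({x | a < ⟪x, ξ⟫_ℝ} ∩ {x | ⟪x, u⟫_ℝ < b})) :=
      hUopen.inter ((isOpen_lt continuous_const hcontξ).inter
        (isOpen_lt hcontu continuous_const))
    have hsub : U ∩ ({x | a < ⟪x, ξ⟫_ℝ} ∩ {x | ⟪x, u⟫_ℝ < b}) ⊆ A \ S := by
      rintro x ⟨hxU, hx1, hx2⟩
      have hx1' : a < ⟪x, ξ⟫_ℝ := hx1
      have hx2' : ⟪x, u⟫_ℝ < b := hx2
      refine ⟨⟨interior_subset hxU, ?_⟩, fun hxS => ?_⟩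
      · exact le_of_lt hx2'
      · have hxa : ⟪x, ξ⟫_ℝ ≤ a := hxS.2
        linarith
    exact (hop.measure_pos volume (Set.nonempty_iff_ne_empty.2 hne)).ne'
      (measure_mono_null hsub h2)
  -- existence of interior points on both sides of the hyperplane
  have hfrontier : volume (frontier K) = 0 := hKconv.addHaar_frontier volume
  have hplane : volume {x : EuclideanSpace ℝ (Fin d) | ⟪x, ξ⟫_ℝ = a} = 0 :=
    volume_hyperplane ξ hξ a
  have hKclosed : IsClosed K := hKcomp.isClosed
  have hfrK : ∀ x ∈ K, x ∉ U → x ∈ frontier K := by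
    intro x hxK hxU
    exact ⟨by rw [hKclosed.closure_eq]; exact hxK, hxU⟩
  have hx0 : ∃ x ∈ U, ⟪x, ξ⟫_ℝ < a := by
    by_contra hno
    push_neg at hno
    have hsub : S ⊆ frontier K ∪ {x | ⟪x, ξ⟫_ℝ = a} := by
      rintro x ⟨hxK, hxle⟩
      by_cases hxU : x ∈ U
      · exact Or.inr (le_antisymm hxle (hno x hxU))
      · exact Or.inl (hfrK x hxK hxU)
    have : volume S = 0 :=
      measure_mono_null hsub (le_antisymm
        ((measure_union_le _ _).trans (by rw [hfrontier, hplane]; norm_num)) zero_le)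
    exact hpos.ne' this
  have hx1 : ∃ x ∈ U, a < ⟪x, ξ⟫_ℝ := by
    by_contra hno
    push_neg at hno
    have hSm : MeasurableSet S :=
      (hKclosed.inter (isClosed_le hcontξ continuous_const)).measurableSet
    have hSfin : volume S ≠ ⊤ :=
      (lt_of_le_of_lt (measure_mono Set.inter_subset_left) hKcomp.measure_lt_top).ne
    have hKSpos : 0 < volume (K \ S) := by
      rw [measure_diff Set.inter_subset_left hSm.nullMeasurableSet hSfin]
      exact tsub_pos_of_lt hlt
    have hsub : K \ S ⊆ frontier K := by
      rintro x ⟨hxK, hxnS⟩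
      have hgt : a < ⟪x, ξ⟫_ℝ := by
        by_contra hle
        exact hxnS ⟨hxK, not_lt.1 hle⟩
      by_cases hxU : x ∈ U
      · exact absurd hgt (not_lt.2 (hno x hxU))
      · exact hfrK x hxK hxU
    exact hKSpos.ne' (measure_mono_null hsub hfrontier)
  obtain ⟨x₀, hx₀U, hx₀⟩ := hx0
  obtain ⟨x₁, hx₁U, hx₁⟩ := hx1
  -- intermediate value: a point p ∈ U with ⟪p, ξ⟫ = a
  have hγcont : Continuous fun s : ℝ => ⟪x₀ + s • (x₁ - x₀), ξ⟫_ℝ :=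
    hcontξ.comp (continuous_const.add (continuous_id.smul continuous_const))
  have hIVT := intermediate_value_Icc (zero_le_one (α := ℝ)) hγcont.continuousOn
  have h0mem : a ∈ Set.Icc (⟪x₀ + (0:ℝ) • (x₁ - x₀), ξ⟫_ℝ) (⟪x₀ + (1:ℝ) • (x₁ - x₀), ξ⟫_ℝ) := by
    constructor
    · simpa using hx₀.le
    · simp only [one_smul]
      have : x₀ + (x₁ - x₀) = x₁ := by abel
      rw [this]
      exact hx₁.le
  obtain ⟨s, hsIcc, hps⟩ := hIVT h0mem
  set p := x₀ + s • (x₁ - x₀) with hpdef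
  have hpU : p ∈ U := by
    have h' : (1 - s) • x₀ + s • x₁ = p := by
      rw [hpdef, smul_sub, sub_smul, one_smul]; abel
    exact h' ▸ hUconv hx₀U hx₁U (by linarith [hsIcc.1, hsIcc.2]) hsIcc.1 (by ring)
  have hpa : ⟪p, ξ⟫_ℝ = a := hps
  -- small perturbation
  obtain ⟨ε, hε, hball⟩ := Metric.isOpen_iff.1 hUopen p hpU
  set η := ε / (2 * (‖w‖ + 1)) with hηdef
  have hwnn : (0:ℝ) ≤ ‖w‖ := norm_nonneg w
  have hη : 0 < η := by positivity
  have hηw : ‖η • w‖ < ε := by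
    rw [norm_smul, Real.norm_of_nonneg hη.le, hηdef]
    rw [div_mul_eq_mul_div, div_lt_iff₀ (by positivity)]
    nlinarith
  have hmemP : p + η • w ∈ U := by
    refine hball (mem_ball.2 ?_)
    rw [dist_eq_norm, add_sub_cancel_left]
    exact hηw
  have hmemM : p - η • w ∈ U := by
    refine hball (mem_ball.2 ?_)
    rw [dist_eq_norm, sub_sub_cancel_left, norm_neg]
    exact hηw
  by_cases hgp : ⟪p, u⟫_ℝ ≤ b
  · -- p + η • w lands in W2
    have hin : p + η • w ∈ U ∩ ({x | a < ⟪x, ξ⟫_ℝ} ∩ {x | ⟪x, u⟫_ℝ < b}) := by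
      refine ⟨hmemP, ?_, ?_⟩
      · show a < ⟪p + η • w, ξ⟫_ℝ
        rw [inner_add_left, real_inner_smul_left, hwξ, hpa]
        linarith
      · show ⟪p + η • w, u⟫_ℝ < b
        rw [inner_add_left, real_inner_smul_left, hwu]
        linarith
    rw [hW2] at hin
    exact hin
  · push_neg at hgp
    have hin : p - η • w ∈ U ∩ ({x | ⟪x, ξ⟫_ℝ < a} ∩ {x | b < ⟪x, u⟫_ℝ}) := by
      refine ⟨hmemM, ?_, ?_⟩
      · show ⟪p - η • w, ξ⟫_ℝ < a
        rw [inner_sub_left, real_inner_smul_left, hwξ, hpa]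
        linarith
      · show b < ⟪p - η • w, u⟫_ℝ
        rw [inner_sub_left, real_inner_smul_left, hwu]
        linarith
    rw [hW1] at hin
    exact hin

theorem floats_of_surface_of_centers_sphere
    (d : ℕ) (hd : 2 ≤ d)
    (K : Set (EuclideanSpace ℝ (Fin d)))
    (hKcomp : IsCompact K) (hKconv : Convex ℝ K) (hKint : (interior K).Nonempty)
    (δ : ℝ) (hδ : 0 < δ) (hδK : ENNReal.ofReal δ < volume K)
    (t : EuclideanSpace ℝ (Fin d) → ℝ)
    (ht : ∀ ξ : EuclideanSpace ℝ (Fin d), ‖ξ‖ = 1 →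
      volume (K ∩ {p | ⟪p, ξ⟫_ℝ ≤ t ξ}) = ENNReal.ofReal δ)
    (hsphere : ∃ R : ℝ, 0 ≤ R ∧ ∀ ξ : EuclideanSpace ℝ (Fin d), ‖ξ‖ = 1 →
      ‖centroid volume (K ∩ {p | ⟪p, ξ⟫_ℝ ≤ t ξ}) - centroid volume K‖ = R) :
    ∀ ξ : EuclideanSpace ℝ (Fin d), ‖ξ‖ = 1 →
      ∃ s : ℝ, centroid volume K - centroid volume (K ∩ {p | ⟪p, ξ⟫_ℝ ≤ t ξ}) = s • ξ := by
  obtain ⟨R, hR0, hRs⟩ := hsphere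
  intro ξ hξ
  have hcontξ : Continuous fun x : EuclideanSpace ℝ (Fin d) => ⟪x, ξ⟫_ℝ :=
    continuous_id.inner continuous_const
  set C := centroid volume K with hCdef
  set S := K ∩ {p | ⟪p, ξ⟫_ℝ ≤ t ξ} with hSdef
  set Bξ := centroid volume S with hBξdef
  have hBC : ‖Bξ - C‖ = R := hRs ξ hξ
  rcases eq_or_lt_of_le hR0 with hR | hR
  · -- R = 0 : the centroids coincide
    refine ⟨0, ?_⟩
    rw [← hR] at hBC
    have h0 : Bξ - C = 0 := norm_eq_zero.1 hBC
    rw [zero_smul, ← neg_sub Bξ C, h0, neg_zero]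
  · -- R > 0
    have hCB : ‖C - Bξ‖ = R := by rw [norm_sub_rev]; exact hBC
    set u := R⁻¹ • (C - Bξ) with hudef
    have huu : ‖u‖ = 1 := by
      rw [hudef, norm_smul, norm_inv, Real.norm_of_nonneg hR.le, hCB]
      field_simp
    have hCBu : C - Bξ = R • u := by
      rw [hudef, smul_smul, mul_inv_cancel₀ hR.ne', one_smul]
    set A := K ∩ {p | ⟪p, u⟫_ℝ ≤ t u} with hAdef
    set Bu := centroid volume A with hBudef
    have hBuC : ‖Bu - C‖ = R := hRs u huu
    -- compactness / measurability
    have hSclosed : IsClosed S := hKcomp.isClosed.inter (isClosed_le hcontξ continuous_const)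
    have hScomp : IsCompact S := hKcomp.inter_right (isClosed_le hcontξ continuous_const)
    have hSm : MeasurableSet S := hSclosed.measurableSet
    have hAcomp : IsCompact A := hKcomp.inter_right
      (isClosed_le (continuous_id.inner continuous_const) continuous_const)
    -- volumes
    have hvS : volume S = ENNReal.ofReal δ := ht ξ hξ
    have hvA : volume A = ENNReal.ofReal δ := ht u huu
    have hvSr : (volume S).toReal = δ := by rw [hvS, ENNReal.toReal_ofReal hδ.le]
    have hvAr : (volume A).toReal = δ := by rw [hvA, ENNReal.toReal_ofReal hδ.le]
    -- inner products with centroids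
    have eS : ⟪Bξ, u⟫_ℝ = δ⁻¹ * ∫ x in S, ⟪x, u⟫_ℝ := by
      rw [hBξdef, inner_centroid S hScomp u, hvSr]
    have eA : ⟪Bu, u⟫_ℝ = δ⁻¹ * ∫ x in A, ⟪x, u⟫_ℝ := by
      rw [hBudef, inner_centroid A hAcomp u, hvAr]
    -- key inequalities
    have hBξu : ⟪Bξ - C, u⟫_ℝ = -R := by
      have : Bξ - C = -(R • u) := by rw [← hCBu]; abel
      rw [this, inner_neg_left, real_inner_smul_left, real_inner_self_eq_norm_sq, huu]
      norm_num
    have hBuu : -R ≤ ⟪Bu - C, u⟫_ℝ := by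
      have habs := abs_real_inner_le_norm (Bu - C) u
      rw [hBuC, huu, mul_one] at habs
      exact neg_le_of_abs_le habs
    have hbath := bathtub K S hKcomp hSm hScomp Set.inter_subset_left u (t u)
      (by rw [hvS, hvA])
    have hge : (∫ x in S, ⟪x, u⟫_ℝ) ≤ ∫ x in A, ⟪x, u⟫_ℝ := by
      have h1 : ⟪Bξ, u⟫_ℝ ≤ ⟪Bu, u⟫_ℝ := by
        have e1 : ⟪Bξ - C, u⟫_ℝ = ⟪Bξ, u⟫_ℝ - ⟪C, u⟫_ℝ := inner_sub_left _ _ _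
        have e2 : ⟪Bu - C, u⟫_ℝ = ⟪Bu, u⟫_ℝ - ⟪C, u⟫_ℝ := inner_sub_left _ _ _
        linarith
      rw [eS, eA] at h1
      have hδinv : (0:ℝ) < δ⁻¹ := by positivity
      exact le_of_mul_le_mul_left (by linarith) hδinv
    have hEq : (∫ x in A, ⟪x, u⟫_ℝ) = ∫ x in S, ⟪x, u⟫_ℝ :=
      le_antisymm hbath.1 hge
    obtain ⟨hd1, hd2⟩ := hbath.2 hEq
    -- geometry: u = ξ or u = -ξ
    have hpos : 0 < volume S := by rw [hvS]; exact ENNReal.ofReal_pos.2 hδ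
    have hlt : volume S < volume K := by rw [hvS]; exact hδK
    have hpar := caps_parallel K hKcomp hKconv ξ u hξ huu (t ξ) (t u) hpos hlt hd1 hd2
    rcases hpar with h | h
    · exact ⟨R, by rw [hCBu, h]⟩
    · refine ⟨-R, ?_⟩
      rw [hCBu, h, neg_smul, smul_neg]
end

section
/- (First Theorem of Dupin, supporting-hyperplane form.) Let d ≥ 2, let K ⊆ ℝ^d be a convex body and let δ ∈ (0, vol(K)). Then for all unit vectors ξ, η ∈ S^{d−1} one has C_δ(η) · ξ ≥ C_δ(ξ) · ξ; that is, the hyperplane through the center of buoyancy C_δ(ξ) orthogonal to ξ (which is parallel to the cutting hyperplane H(ξ)) supports the surface of centers S_δ at C_δ(ξ). -/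
open MeasureTheory Metric Set Filter
open scoped InnerProductSpace ENNReal Pointwise NNReal Topology

theorem dupin_first_supporting_hyperplane
    (d : ℕ) (hd : 2 ≤ d)
    (K : Set (EuclideanSpace ℝ (Fin d)))
    (hKcomp : IsCompact K) (hKconv : Convex ℝ K) (hKint : (interior K).Nonempty)
    (δ : ℝ) (hδ : 0 < δ) (hδK : ENNReal.ofReal δ < volume K)
    (t : EuclideanSpace ℝ (Fin d) → ℝ)
    (ht : ∀ ξ : EuclideanSpace ℝ (Fin d), ‖ξ‖ = 1 →
      volume (K ∩ {p | ⟪p, ξ⟫_ℝ ≤ t ξ}) = ENNReal.ofReal δ) :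
    ∀ ξ η : EuclideanSpace ℝ (Fin d), ‖ξ‖ = 1 → ‖η‖ = 1 →
      ⟪centroid volume (K ∩ {p | ⟪p, ξ⟫_ℝ ≤ t ξ}), ξ⟫_ℝ ≤
        ⟪centroid volume (K ∩ {p | ⟪p, η⟫_ℝ ≤ t η}), ξ⟫_ℝ := by
  intro ξ η hξ hη
  set A := K ∩ {p | ⟪p, ξ⟫_ℝ ≤ t ξ} with hAdef
  set B := K ∩ {p | ⟪p, η⟫_ℝ ≤ t η} with hBdef
  set g : EuclideanSpace ℝ (Fin d) → ℝ := fun x => ⟪x, ξ⟫_ℝ with hg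
  have hgc : Continuous g := Continuous.inner continuous_id continuous_const
  have hclξ : IsClosed {p : EuclideanSpace ℝ (Fin d) | ⟪p, ξ⟫_ℝ ≤ t ξ} :=
    isClosed_le hgc continuous_const
  have hclη : IsClosed {p : EuclideanSpace ℝ (Fin d) | ⟪p, η⟫_ℝ ≤ t η} :=
    isClosed_le (Continuous.inner continuous_id continuous_const) continuous_const
  have hAc : IsCompact A := hKcomp.inter_right hclξ
  have hBc : IsCompact B := hKcomp.inter_right hclη
  have hAm : MeasurableSet A := hAc.measurableSet
  have hBm : MeasurableSet B := hBc.measurableSet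
  have hvolA : volume A = ENNReal.ofReal δ := ht ξ hξ
  have hvolB : volume B = ENNReal.ofReal δ := ht η hη
  have hfin : volume (A ∩ B) ≠ ⊤ :=
    ne_top_of_le_ne_top (by simp [hvolA]) (measure_mono inter_subset_left)
  have hABfin : volume (A \ B) ≠ ⊤ :=
    ne_top_of_le_ne_top (by simp [hvolA]) (measure_mono diff_subset)
  have hBAfin : volume (B \ A) ≠ ⊤ :=
    ne_top_of_le_ne_top (by simp [hvolB]) (measure_mono diff_subset)
  have hdiffeq : volume (A \ B) = volume (B \ A) := by
    have h1 : volume (A ∩ B) + volume (A \ B) = ENNReal.ofReal δ :=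
      (measure_inter_add_diff A hBm).trans hvolA
    have h2 : volume (A ∩ B) + volume (B \ A) = ENNReal.ofReal δ := by
      rw [Set.inter_comm]; exact (measure_inter_add_diff B hAm).trans hvolB
    exact (ENNReal.add_right_inj hfin).1 (h1.trans h2.symm)
  have hgA : IntegrableOn g A := hgc.continuousOn.integrableOn_compact hAc
  have hgB : IntegrableOn g B := hgc.continuousOn.integrableOn_compact hBc
  -- bound on A \ B
  have hub : ∫ x in A \ B, g x ≤ (volume (A \ B)).toReal * t ξ := by
    have h0 : ∫ x in A \ B, (g x - t ξ) ≤ 0 :=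
      setIntegral_nonpos (hAm.diff hBm) (fun x hx => sub_nonpos.2 hx.1.2)
    have hc : IntegrableOn (fun _ => t ξ) (A \ B) :=
      integrableOn_const hABfin
    rw [integral_sub (hgA.mono_set diff_subset) hc, setIntegral_const,
      smul_eq_mul, sub_nonpos] at h0
    exact h0
  have hlb : (volume (B \ A)).toReal * t ξ ≤ ∫ x in B \ A, g x := by
    have h0 : 0 ≤ ∫ x in B \ A, (g x - t ξ) := by
      refine setIntegral_nonneg (hBm.diff hAm) (fun x hx => sub_nonneg.2 ?_)
      have hne : ¬ (⟪x, ξ⟫_ℝ ≤ t ξ) := fun h => hx.2 ⟨hx.1.1, h⟩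
      exact (not_le.1 hne).le
    have hc : IntegrableOn (fun _ => t ξ) (B \ A) :=
      integrableOn_const hBAfin
    rw [integral_sub (hgB.mono_set diff_subset) hc, setIntegral_const,
      smul_eq_mul, sub_nonneg] at h0
    exact h0
  have hkey : ∫ x in A, g x ≤ ∫ x in B, g x := by
    have hsplitA : (∫ x in A ∩ B, g x) + ∫ x in A \ B, g x = ∫ x in A, g x :=
      integral_inter_add_diff hBm hgA
    have hsplitB : (∫ x in A ∩ B, g x) + ∫ x in B \ A, g x = ∫ x in B, g x := by
      rw [Set.inter_comm]; exact integral_inter_add_diff hAm hgB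
    rw [← hsplitA, ← hsplitB]
    refine add_le_add_right (hub.trans ?_) _
    rw [hdiffeq]; exact hlb
  -- translate centroid inner products to integrals
  have htoR : (volume A).toReal = δ := by rw [hvolA]; exact ENNReal.toReal_ofReal hδ.le
  have htoRB : (volume B).toReal = δ := by rw [hvolB]; exact ENNReal.toReal_ofReal hδ.le
  have hidA : Integrable (fun x => x) (volume.restrict A) :=
    continuousOn_id.integrableOn_compact hAc
  have hidB : Integrable (fun x => x) (volume.restrict B) :=
    continuousOn_id.integrableOn_compact hBc
  have hinner : ∀ (L : Set (EuclideanSpace ℝ (Fin d))),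
      Integrable (fun x => x) (volume.restrict L) →
      ⟪∫ x in L, x, ξ⟫_ℝ = ∫ x in L, g x := by
    intro L hL
    rw [real_inner_comm, ← integral_inner hL ξ]
    simp [hg, real_inner_comm, mul_comm]
  have hcA : ⟪centroid volume A, ξ⟫_ℝ = δ⁻¹ * ∫ x in A, g x := by
    rw [centroid, real_inner_smul_left, htoR, hinner A hidA]
  have hcB : ⟪centroid volume B, ξ⟫_ℝ = δ⁻¹ * ∫ x in B, g x := by
    rw [centroid, real_inner_smul_left, htoRB, hinner B hidB]
  rw [hcA, hcB]
  exact mul_le_mul_of_nonneg_left hkey (inv_nonneg.2 hδ.le)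
end

section
/- (First Theorem of Dupin, convexity of the surface of centers.) Let d ≥ 2, let K ⊆ ℝ^d be a convex body and let δ ∈ (0, vol(K)). Then no point of the surface of centers lies in the interior of its convex hull: for every unit vector ξ ∈ S^{d−1}, C_δ(ξ) ∉ interior(convexHull(S_δ)); equivalently, S_δ is contained in the topological boundary of the convex hull of S_δ. -/
open MeasureTheory Metric Set Filter
open scoped InnerProductSpace ENNReal Pointwise NNReal Topology

/-- Among all subsets of `K` of fixed volume, the submerged part minimizes the `ξ`-moment. -/
lemma dupin_key {d : ℕ} {K : Set (EuclideanSpace ℝ (Fin d))} (hKcomp : IsCompact K)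
    {δ : ℝ} (hδ : 0 < δ)
    (ξ η : EuclideanSpace ℝ (Fin d)) (a b : ℝ)
    (hSvol : volume (K ∩ {p | ⟪p, ξ⟫_ℝ ≤ a}) = ENNReal.ofReal δ)
    (hTvol : volume (K ∩ {p | ⟪p, η⟫_ℝ ≤ b}) = ENNReal.ofReal δ) :
    ⟪centroid volume (K ∩ {p | ⟪p, ξ⟫_ℝ ≤ a}), ξ⟫_ℝ ≤
      ⟪centroid volume (K ∩ {p | ⟪p, η⟫_ℝ ≤ b}), ξ⟫_ℝ := by
  set S := K ∩ {p | ⟪p, ξ⟫_ℝ ≤ a} with hSdef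
  set T := K ∩ {p | ⟪p, η⟫_ℝ ≤ b} with hTdef
  have hcont : Continuous fun x : EuclideanSpace ℝ (Fin d) => ⟪x, ξ⟫_ℝ :=
    continuous_id.inner continuous_const
  have hcontη : Continuous fun x : EuclideanSpace ℝ (Fin d) => ⟪x, η⟫_ℝ :=
    continuous_id.inner continuous_const
  have hScomp : IsCompact S := hKcomp.inter_right (isClosed_le hcont continuous_const)
  have hTcomp : IsCompact T := hKcomp.inter_right (isClosed_le hcontη continuous_const)
  have hSm : MeasurableSet S := hScomp.measurableSet
  have hTm : MeasurableSet T := hTcomp.measurableSet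
  have hSint : IntegrableOn (fun x => ⟪x, ξ⟫_ℝ) S volume :=
    hcont.continuousOn.integrableOn_compact hScomp
  have hTint : IntegrableOn (fun x => ⟪x, ξ⟫_ℝ) T volume :=
    hcont.continuousOn.integrableOn_compact hTcomp
  -- measures of the symmetric difference parts agree
  have hfin : volume (S ∩ T) ≠ ⊤ :=
    ((measure_mono inter_subset_left).trans_lt (hSvol ▸ ENNReal.ofReal_lt_top)).ne
  have hdiffeq : volume (S \ T) = volume (T \ S) := by
    have h1 : volume (S ∩ T) + volume (S \ T) = ENNReal.ofReal δ := by
      rw [measure_inter_add_diff S hTm, hSvol]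
    have h2 : volume (S ∩ T) + volume (T \ S) = ENNReal.ofReal δ := by
      rw [inter_comm, measure_inter_add_diff T hSm, hTvol]
    exact (ENNReal.add_right_inj hfin).mp (h1.trans h2.symm)
  -- integral inequality over symmetric difference
  have hSTfin : volume (S \ T) ≠ ⊤ :=
    ((measure_mono diff_subset).trans_lt (hSvol ▸ ENNReal.ofReal_lt_top)).ne
  have hTSfin : volume (T \ S) ≠ ⊤ :=
    ((measure_mono diff_subset).trans_lt (hTvol ▸ ENNReal.ofReal_lt_top)).ne
  have h1 : ∫ x in S \ T, ⟪x, ξ⟫_ℝ ≤ (volume (S \ T)).toReal * a := by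
    have := setIntegral_mono_on (hSint.mono_set diff_subset)
      (integrableOn_const (C := a) hSTfin) (hSm.diff hTm)
      (fun x hx => (hx.1.2 : ⟪x, ξ⟫_ℝ ≤ a))
    simpa [setIntegral_const, smul_eq_mul, Measure.real] using this
  have h2 : (volume (T \ S)).toReal * a ≤ ∫ x in T \ S, ⟪x, ξ⟫_ℝ := by
    have := setIntegral_mono_on (integrableOn_const (C := a) hTSfin)
      (hTint.mono_set diff_subset) (hTm.diff hSm)
      (fun x hx => by
        have hxK : x ∈ K := hx.1.1
        have hxnS : x ∉ S := hx.2
        have : ¬ (⟪x, ξ⟫_ℝ ≤ a) := fun h => hxnS ⟨hxK, h⟩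
        exact (not_le.mp this).le)
    simpa [setIntegral_const, smul_eq_mul, Measure.real] using this
  have hmom : ∫ x in S, ⟪x, ξ⟫_ℝ ≤ ∫ x in T, ⟪x, ξ⟫_ℝ := by
    have hs : (∫ x in S ∩ T, ⟪x, ξ⟫_ℝ) + ∫ x in S \ T, ⟪x, ξ⟫_ℝ = ∫ x in S, ⟪x, ξ⟫_ℝ :=
      integral_inter_add_diff hTm hSint
    have hty : (∫ x in T ∩ S, ⟪x, ξ⟫_ℝ) + ∫ x in T \ S, ⟪x, ξ⟫_ℝ = ∫ x in T, ⟪x, ξ⟫_ℝ :=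
      integral_inter_add_diff hSm hTint
    rw [← hs, ← hty, inter_comm T S]
    exact add_le_add_right (h1.trans (by rw [hdiffeq]; exact h2)) _
  -- translate moments to centroids
  have hSid : IntegrableOn (fun x => x) S volume :=
    continuous_id.continuousOn.integrableOn_compact hScomp
  have hTid : IntegrableOn (fun x => x) T volume :=
    continuous_id.continuousOn.integrableOn_compact hTcomp
  have hinS : ⟪∫ x in S, x, ξ⟫_ℝ = ∫ x in S, ⟪x, ξ⟫_ℝ := by
    rw [real_inner_comm, ← integral_inner hSid ξ]
    exact integral_congr_ae (Filter.Eventually.of_forall fun x => real_inner_comm _ _)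
  have hinT : ⟪∫ x in T, x, ξ⟫_ℝ = ∫ x in T, ⟪x, ξ⟫_ℝ := by
    rw [real_inner_comm, ← integral_inner hTid ξ]
    exact integral_congr_ae (Filter.Eventually.of_forall fun x => real_inner_comm _ _)
  have hδ' : (0:ℝ) ≤ δ⁻¹ := inv_nonneg.2 hδ.le
  simp only [centroid, real_inner_smul_left, hSvol, hTvol, hinS, hinT,
    ENNReal.toReal_ofReal hδ.le]
  exact mul_le_mul_of_nonneg_left hmom hδ'

theorem dupin_first_convexity
    (d : ℕ) (hd : 2 ≤ d)
    (K : Set (EuclideanSpace ℝ (Fin d)))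
    (hKcomp : IsCompact K) (hKconv : Convex ℝ K) (hKint : (interior K).Nonempty)
    (δ : ℝ) (hδ : 0 < δ) (hδK : ENNReal.ofReal δ < volume K)
    (t : EuclideanSpace ℝ (Fin d) → ℝ)
    (ht : ∀ ξ : EuclideanSpace ℝ (Fin d), ‖ξ‖ = 1 →
      volume (K ∩ {p | ⟪p, ξ⟫_ℝ ≤ t ξ}) = ENNReal.ofReal δ) :
    ∀ ξ : EuclideanSpace ℝ (Fin d), ‖ξ‖ = 1 →
      centroid volume (K ∩ {p | ⟪p, ξ⟫_ℝ ≤ t ξ}) ∉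
        interior (convexHull ℝ
          {x : EuclideanSpace ℝ (Fin d) | ∃ η : EuclideanSpace ℝ (Fin d), ‖η‖ = 1 ∧
            x = centroid volume (K ∩ {p | ⟪p, η⟫_ℝ ≤ t η})}) := by
  intro ξ hξ hmem
  set c := centroid volume (K ∩ {p | ⟪p, ξ⟫_ℝ ≤ t ξ}) with hc
  set Sδ := {x : EuclideanSpace ℝ (Fin d) | ∃ η : EuclideanSpace ℝ (Fin d), ‖η‖ = 1 ∧
      x = centroid volume (K ∩ {p | ⟪p, η⟫_ℝ ≤ t η})} with hSδ
  -- the convex hull lies in the halfspace { x | ⟪c,ξ⟫ ≤ ⟪x,ξ⟫ }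
  have hlin : IsLinearMap ℝ (fun x : EuclideanSpace ℝ (Fin d) => ⟪x, ξ⟫_ℝ) :=
    ⟨fun x y => inner_add_left x y ξ, fun r x => real_inner_smul_left x ξ r⟩
  have hhull : convexHull ℝ Sδ ⊆ {x | ⟪c, ξ⟫_ℝ ≤ ⟪x, ξ⟫_ℝ} := by
    apply convexHull_min _ (convex_halfSpace_ge hlin _)
    rintro x ⟨η, hη, rfl⟩
    exact dupin_key hKcomp hδ ξ η (t ξ) (t η) (ht ξ hξ) (ht η hη)
  obtain ⟨ε, hε, hball⟩ := Metric.isOpen_iff.mp isOpen_interior c hmem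
  have hy : c - (ε / 2) • ξ ∈ ball c ε := by
    rw [mem_ball, dist_eq_norm]
    have : c - (ε / 2) • ξ - c = -((ε / 2) • ξ) := by abel
    rw [this, norm_neg, norm_smul, hξ, mul_one, Real.norm_eq_abs,
      abs_of_pos (by linarith)]
    linarith
  have hyS : ⟪c, ξ⟫_ℝ ≤ ⟪c - (ε / 2) • ξ, ξ⟫_ℝ :=
    hhull (interior_subset (hball hy))
  rw [inner_sub_left, real_inner_smul_left, real_inner_self_eq_norm_sq, hξ] at hyS
  nlinarith
end

section
/- Let d ≥ 2, let K ⊆ ℝ^d be a convex body and let (δ_n)_{n=1}^∞ be a sequence of positive numbers with δ_n → 0 such that for each n the Dupin floating body of K at level δ_n exists and coincides with the convex floating body K_{δ_n} (that is, K_{δ_n} is nonempty and every supporting hyperplane of K_{δ_n} cuts off from K a set of volume exactly δ_n). If K floats in equilibrium in every direction at each level δ_n, then K is a Euclidean ball: K = closedBall(z, r) for some z ∈ ℝ^d and r > 0. -/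
set_option maxHeartbeats 1000000

open MeasureTheory Metric Set Filter
open scoped InnerProductSpace ENNReal Pointwise NNReal Topology

lemma centroid_mem {d : ℕ} {s : Set (EuclideanSpace ℝ (Fin d))}
    (hconv : Convex ℝ s) (hcomp : IsCompact s) (h0 : volume s ≠ 0) :
    centroid volume s ∈ s := by
  have htop : volume s ≠ ⊤ := hcomp.measure_lt_top.ne
  set μ : Measure (EuclideanSpace ℝ (Fin d)) := (volume s)⁻¹ • volume.restrict s with hμ
  have hprob : IsProbabilityMeasure μ := by
    constructor
    rw [hμ, Measure.smul_apply, Measure.restrict_apply_univ, smul_eq_mul,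
      ENNReal.inv_mul_cancel h0 htop]
  have hmeas : MeasurableSet s := hcomp.isClosed.measurableSet
  have hint : Integrable (fun x => x) μ := by
    have h1 : IntegrableOn (fun x => x) s volume :=
      continuous_id.continuousOn.integrableOn_compact hcomp
    rw [hμ]
    exact h1.smul_measure (ENNReal.inv_ne_top.mpr h0)
  have hae : ∀ᵐ x ∂μ, x ∈ s := by
    rw [hμ]
    exact MeasureTheory.Measure.ae_smul_measure (ae_restrict_mem hmeas) _
  have := hconv.integral_mem hcomp.isClosed hae hint
  have heq : centroid volume s = ∫ x, x ∂μ := by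
    rw [hμ, integral_smul_measure, centroid, ENNReal.toReal_inv]
  rwa [heq]

lemma exists_great_circle {d : ℕ} (hd : 2 ≤ d) {ν ν' : EuclideanSpace ℝ (Fin d)}
    (hν : ‖ν‖ = 1) (hν' : ‖ν'‖ = 1) :
    ∃ e : EuclideanSpace ℝ (Fin d), ‖e‖ = 1 ∧ ⟪ν, e⟫_ℝ = 0 ∧
      ∃ θ : ℝ, 0 ≤ θ ∧ θ ≤ Real.pi ∧ ν' = Real.cos θ • ν + Real.sin θ • e := by
  have hνne : ν ≠ 0 := by intro h; rw [h, norm_zero] at hν; norm_num at hν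
  obtain ⟨e₀, he₀mem, he₀ne⟩ :
      ∃ e₀, e₀ ∈ (ℝ ∙ ν)ᗮ ∧ e₀ ≠ 0 := by
    have hrank : 0 < Module.finrank ℝ ((ℝ ∙ ν)ᗮ : Submodule ℝ (EuclideanSpace ℝ (Fin d))) := by
      have h1 : Module.finrank ℝ (ℝ ∙ ν : Submodule ℝ (EuclideanSpace ℝ (Fin d))) = 1 :=
        finrank_span_singleton hνne
      have h2 := Submodule.finrank_add_finrank_orthogonal (K := (ℝ ∙ ν))
      have h3 : Module.finrank ℝ (EuclideanSpace ℝ (Fin d)) = d := finrank_euclideanSpace_fin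
      omega
    have hbot : ((ℝ ∙ ν)ᗮ : Submodule ℝ (EuclideanSpace ℝ (Fin d))) ≠ ⊥ := by
      intro h
      rw [h] at hrank
      simp at hrank
    exact Submodule.exists_mem_ne_zero_of_ne_bot hbot
  set c : ℝ := ⟪ν', ν⟫_ℝ with hc
  set w : EuclideanSpace ℝ (Fin d) := ν' - c • ν with hw
  have hvw : ⟪ν, w⟫_ℝ = 0 := by
    simp only [hw, inner_sub_right, real_inner_smul_right, real_inner_comm ν ν',
      real_inner_self_eq_norm_sq, hν]
    rw [real_inner_comm, ← hc]
    ring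
  have hc1 : |c| ≤ 1 := by
    simpa [hν, hν'] using abs_real_inner_le_norm ν' ν
  have hdecomp : ν' = c • ν + w := by rw [hw]; abel
  have hnw : (1 : ℝ) = c ^ 2 + ‖w‖ ^ 2 := by
    have h1 : ‖ν'‖ ^ 2 = ‖c • ν‖ ^ 2 + 2 * ⟪c • ν, w⟫_ℝ + ‖w‖ ^ 2 := by
      rw [hdecomp] at *
      exact norm_add_sq_real _ _
    rw [hν', one_pow, real_inner_smul_left, hvw, norm_smul, mul_pow, hν] at h1
    simp only [Real.norm_eq_abs, sq_abs] at h1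
    linarith
  by_cases hw0 : w = 0
  · -- ν' = c • ν with c = ±1
    have hc2 : c ^ 2 = 1 := by rw [hw0, norm_zero] at hnw; linarith [hnw]
    set e : EuclideanSpace ℝ (Fin d) := ‖e₀‖⁻¹ • e₀ with he
    have heu : ‖e‖ = 1 := norm_smul_inv_norm he₀ne
    have heν : ⟪ν, e⟫_ℝ = 0 := by
      have : ⟪ν, e₀⟫_ℝ = 0 :=
        (Submodule.mem_orthogonal _ _).1 he₀mem ν (Submodule.mem_span_singleton_self ν)
      rw [he, real_inner_smul_right, this, mul_zero]
    have hcc : c = 1 ∨ c = -1 := by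
      have hfac : (c - 1) * (c + 1) = 0 := by ring_nf; linarith
      rcases mul_eq_zero.1 hfac with h | h
      · left; linarith
      · right; linarith
    rcases hcc with h | h
    · refine ⟨e, heu, heν, 0, le_refl 0, Real.pi_nonneg, ?_⟩
      simp [hdecomp, hw0, h]
    · refine ⟨e, heu, heν, Real.pi, Real.pi_nonneg, le_refl _, ?_⟩
      simp [hdecomp, hw0, h]
  · set e : EuclideanSpace ℝ (Fin d) := ‖w‖⁻¹ • w with he
    have heu : ‖e‖ = 1 := norm_smul_inv_norm hw0
    have heν : ⟪ν, e⟫_ℝ = 0 := by rw [he, real_inner_smul_right, hvw, mul_zero]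
    refine ⟨e, heu, heν, Real.arccos c, Real.arccos_nonneg c, Real.arccos_le_pi c, ?_⟩
    rw [Real.cos_arccos (neg_le_of_abs_le hc1) (le_of_abs_le hc1), Real.sin_arccos]
    have hsq : Real.sqrt (1 - c ^ 2) = ‖w‖ := by
      rw [show (1 : ℝ) - c ^ 2 = ‖w‖ ^ 2 by linarith]
      exact Real.sqrt_sq (norm_nonneg w)
    rw [hsq, hdecomp, he, smul_smul]
    congr 1
    rw [mul_inv_cancel₀ (norm_ne_zero_iff.mpr hw0), one_smul]

lemma sphere_chain_s11 {d : ℕ} (hd : 2 ≤ d) (g : EuclideanSpace ℝ (Fin d) → ℝ)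
    (hg0 : ∀ ν, ‖ν‖ = 1 → 0 ≤ g ν)
    (hkey : ∀ ν ν', ‖ν‖ = 1 → ‖ν'‖ = 1 → g ν * ⟪ν, ν'⟫_ℝ ≤ g ν') :
    ∀ ν ν', ‖ν‖ = 1 → ‖ν'‖ = 1 → g ν ≤ g ν' := by
  intro ν ν' hν hν'
  obtain ⟨e, he, heν, θ, hθ0, hθπ, hθ⟩ := exists_great_circle hd hν hν'
  set γ : ℝ → EuclideanSpace ℝ (Fin d) := fun α => Real.cos α • ν + Real.sin α • e with hγ
  have hγinner : ∀ α β, ⟪γ α, γ β⟫_ℝ = Real.cos (α - β) := by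
    intro α β
    rw [hγ]
    simp only [inner_add_left, inner_add_right, real_inner_smul_left, real_inner_smul_right]
    have hee : ⟪e, ν⟫_ℝ = 0 := by rw [real_inner_comm]; exact heν
    rw [real_inner_self_eq_norm_sq, real_inner_self_eq_norm_sq, hν, he, heν, hee, Real.cos_sub]
    ring
  have hγnorm : ∀ α, ‖γ α‖ = 1 := by
    intro α
    have h1 : ‖γ α‖ ^ 2 = 1 := by
      rw [← real_inner_self_eq_norm_sq, hγinner, sub_self, Real.cos_zero]
    nlinarith [norm_nonneg (γ α)]
  have hγ0 : γ 0 = ν := by simp [hγ]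
  have hγθ : γ θ = ν' := by simp only [hγ]; rw [← hθ]
  -- step inequality along the great circle
  have hstep : ∀ k : ℕ, 2 ≤ k → g ν * Real.cos (θ / k) ^ k ≤ g ν' := by
    intro k hk
    have hkpos : (0 : ℝ) < k := by positivity
    have hhk0 : 0 ≤ θ / k := by positivity
    have hhkπ : θ / k ≤ Real.pi / 2 := by
      rw [div_le_div_iff₀ hkpos (by norm_num)]
      calc θ * 2 ≤ Real.pi * 2 := by linarith
        _ ≤ Real.pi * k := by
            have : (2 : ℝ) ≤ k := by exact_mod_cast hk
            nlinarith [Real.pi_pos]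
    have hcnn : 0 ≤ Real.cos (θ / k) :=
      Real.cos_nonneg_of_mem_Icc ⟨by linarith [Real.pi_pos], hhkπ⟩
    have hind : ∀ i : ℕ, i ≤ k → g ν * Real.cos (θ / k) ^ i ≤ g (γ (i * (θ / k))) := by
      intro i
      induction i with
      | zero => intro _; simp [hγ0]
      | succ i ih =>
        intro hik
        have h1 := ih (by omega)
        have h2 : g (γ (i * (θ / k))) * ⟪γ (i * (θ / k)), γ ((i + 1 : ℕ) * (θ / k))⟫_ℝ ≤
            g (γ ((i + 1 : ℕ) * (θ / k))) :=
          hkey _ _ (hγnorm _) (hγnorm _)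
        rw [hγinner] at h2
        have h3 : ((i : ℝ) * (θ / k) - (i + 1 : ℕ) * (θ / k)) = -(θ / k) := by
          push_cast
          ring
        rw [h3, Real.cos_neg] at h2
        calc g ν * Real.cos (θ / k) ^ (i + 1)
            = (g ν * Real.cos (θ / k) ^ i) * Real.cos (θ / k) := by ring
          _ ≤ g (γ (i * (θ / k))) * Real.cos (θ / k) :=
              mul_le_mul_of_nonneg_right h1 hcnn
          _ ≤ g (γ ((i + 1 : ℕ) * (θ / k))) := h2
    have := hind k le_rfl
    rwa [mul_div_cancel₀ θ (ne_of_gt hkpos) , hγθ] at this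
    -- note: (k : ℝ) * (θ / k) = θ
  -- pass to the limit k → ∞
  have hlim : Tendsto (fun k : ℕ => g ν * Real.cos (θ / k) ^ k) atTop (nhds (g ν)) := by
    have hcos : Tendsto (fun k : ℕ => Real.cos (θ / k) ^ k) atTop (nhds 1) := by
      have hlow : Tendsto (fun k : ℕ => 1 - θ ^ 2 / 2 / k) atTop (nhds 1) := by
        have := tendsto_const_div_atTop_nhds_zero_nat (θ ^ 2 / 2)
        have h2 := Tendsto.const_sub (1 : ℝ) this
        simpa using h2
      refine tendsto_of_tendsto_of_tendsto_of_le_of_le' hlow tendsto_const_nhds ?_ ?_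
      · -- eventual lower bound
        filter_upwards [eventually_ge_atTop (max 4 (Nat.ceil (θ ^ 2)))] with k hk
        have hk4 : (4 : ℕ) ≤ k := le_trans (le_max_left _ _) hk
        have hkθ : θ ^ 2 ≤ k := le_trans (Nat.le_ceil _) (by exact_mod_cast le_trans (le_max_right _ _) hk)
        have hkpos : (0 : ℝ) < k := by positivity
        have hb0 : 0 ≤ 1 - (θ / k) ^ 2 / 2 := by
          have h4k : (1 : ℝ) ≤ k := by
            have : (4 : ℝ) ≤ (k : ℝ) := by exact_mod_cast hk4
            linarith
          have hquot : (θ / k) ^ 2 ≤ 1 := by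
            rw [div_pow, div_le_one (by positivity)]
            calc θ ^ 2 ≤ (k : ℝ) := hkθ
              _ ≤ (k : ℝ) ^ 2 := by nlinarith
          linarith
        have hcb : 1 - (θ / k) ^ 2 / 2 ≤ Real.cos (θ / k) := Real.one_sub_sq_div_two_le_cos
        have h1 : (1 - (θ / k) ^ 2 / 2) ^ k ≤ Real.cos (θ / k) ^ k :=
          pow_le_pow_left₀ hb0 hcb k
        have h2 : 1 - θ ^ 2 / 2 / k ≤ (1 - (θ / k) ^ 2 / 2) ^ k := by
          have hber := one_add_mul_le_pow (a := -((θ / k) ^ 2 / 2)) (by nlinarith [sq_nonneg (θ / k)]) k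
          have heq : 1 + (k : ℝ) * -((θ / k) ^ 2 / 2) = 1 - θ ^ 2 / 2 / k := by
            field_simp
            ring
          rw [heq] at hber
          rw [← sub_eq_add_neg] at hber
          exact hber
        linarith
      · filter_upwards [eventually_ge_atTop 2] with k hk
        have hkpos : (0 : ℝ) < k := by positivity
        have hc1 : Real.cos (θ / k) ≤ 1 := Real.cos_le_one _
        have hc0 : 0 ≤ Real.cos (θ / k) := by
          apply Real.cos_nonneg_of_mem_Icc
          constructor
          · have : 0 ≤ θ / k := by positivity
            linarith [Real.pi_pos]
          · rw [div_le_div_iff₀ hkpos (by norm_num)]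
            have : (2 : ℝ) ≤ k := by exact_mod_cast hk
            nlinarith [Real.pi_pos]
        exact pow_le_one₀ hc0 hc1
    have := hcos.const_mul (g ν)
    simpa using this
  refine le_of_tendsto hlim ?_
  filter_upwards [eventually_ge_atTop 2] with k hk using hstep k hk

theorem ball_of_floats_at_small_levels
    (d : ℕ) (hd : 2 ≤ d)
    (K : Set (EuclideanSpace ℝ (Fin d)))
    (hKcomp : IsCompact K) (hKconv : Convex ℝ K) (hKint : (interior K).Nonempty)
    (δ : ℕ → ℝ) (hδpos : ∀ n, 0 < δ n)
    (hδK : ∀ n, ENNReal.ofReal (δ n) < volume K)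
    (hδlim : Tendsto δ atTop (nhds 0))
    (t : ℕ → EuclideanSpace ℝ (Fin d) → ℝ)
    (ht : ∀ n, ∀ ξ : EuclideanSpace ℝ (Fin d), ‖ξ‖ = 1 →
      volume (K ∩ {p | ⟪p, ξ⟫_ℝ ≤ t n ξ}) = ENNReal.ofReal (δ n))
    -- the convex floating body K_{δ_n} is nonempty
    (hne : ∀ n, {p : EuclideanSpace ℝ (Fin d) |
      ∀ ξ : EuclideanSpace ℝ (Fin d), ‖ξ‖ = 1 → t n ξ ≤ ⟪p, ξ⟫_ℝ}.Nonempty)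
    -- and it is the Dupin floating body: every supporting hyperplane of K_{δ_n}
    -- cuts off from K a set of volume exactly δ_n
    (hdupin : ∀ n, ∀ ν : EuclideanSpace ℝ (Fin d), ∀ s : ℝ, ‖ν‖ = 1 →
      (∀ y ∈ {p : EuclideanSpace ℝ (Fin d) |
          ∀ ξ : EuclideanSpace ℝ (Fin d), ‖ξ‖ = 1 → t n ξ ≤ ⟪p, ξ⟫_ℝ}, s ≤ ⟪y, ν⟫_ℝ) →
      (∃ y ∈ {p : EuclideanSpace ℝ (Fin d) |
          ∀ ξ : EuclideanSpace ℝ (Fin d), ‖ξ‖ = 1 → t n ξ ≤ ⟪p, ξ⟫_ℝ}, ⟪y, ν⟫_ℝ = s) →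
      volume (K ∩ {p | ⟪p, ν⟫_ℝ ≤ s}) = ENNReal.ofReal (δ n))
    -- K floats in equilibrium in every direction at each level δ_n
    (hfloat : ∀ n, ∀ ξ : EuclideanSpace ℝ (Fin d), ‖ξ‖ = 1 →
      ∃ s : ℝ, centroid volume K - centroid volume (K ∩ {p | ⟪p, ξ⟫_ℝ ≤ t n ξ}) = s • ξ) :
    ∃ (z : EuclideanSpace ℝ (Fin d)) (r : ℝ), 0 < r ∧ K = Metric.closedBall z r := by
  classical
  obtain ⟨w, hw⟩ := hKint
  have hKne : K.Nonempty := ⟨w, interior_subset hw⟩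
  have hdpos : 0 < d := by omega
  haveI : Nonempty (Fin d) := ⟨⟨0, hdpos⟩⟩
  set ν₀ : EuclideanSpace ℝ (Fin d) := EuclideanSpace.single (⟨0, hdpos⟩ : Fin d) (1 : ℝ)
    with hν₀def
  have hν₀ : ‖ν₀‖ = 1 := by rw [hν₀def, EuclideanSpace.norm_single]; norm_num
  have hKvol : volume K ≠ 0 :=
    (lt_trans (ENNReal.ofReal_pos.mpr (hδpos 0)) (hδK 0)).ne'
  set z := centroid volume K with hzdef
  have hzK : z ∈ K := centroid_mem hKconv hKcomp hKvol
  -- basic facts about half-spaces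
  have hinnercont : ∀ ξ : EuclideanSpace ℝ (Fin d),
      Continuous (fun p : EuclideanSpace ℝ (Fin d) => ⟪p, ξ⟫_ℝ) :=
    fun ξ => Continuous.inner continuous_id continuous_const
  have hhalfclosed : ∀ (ξ : EuclideanSpace ℝ (Fin d)) (c : ℝ),
      IsClosed {p : EuclideanSpace ℝ (Fin d) | ⟪p, ξ⟫_ℝ ≤ c} :=
    fun ξ c => isClosed_le (hinnercont ξ) continuous_const
  have hhalfconvex : ∀ (ξ : EuclideanSpace ℝ (Fin d)) (c : ℝ),
      Convex ℝ {p : EuclideanSpace ℝ (Fin d) | ⟪p, ξ⟫_ℝ ≤ c} := by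
    intro ξ c x hx y hy a b ha hb hab
    simp only [Set.mem_setOf_eq] at hx hy ⊢
    rw [inner_add_left, real_inner_smul_left, real_inner_smul_left]
    have hac : a * c + b * c = c := by rw [← add_mul, hab, one_mul]
    have h1 := mul_le_mul_of_nonneg_left hx ha
    have h2 := mul_le_mul_of_nonneg_left hy hb
    linarith
  -- facts about the caps
  have hcapmem : ∀ n (ξ : EuclideanSpace ℝ (Fin d)), ‖ξ‖ = 1 →
      centroid volume (K ∩ {p | ⟪p, ξ⟫_ℝ ≤ t n ξ}) ∈ K ∩ {p | ⟪p, ξ⟫_ℝ ≤ t n ξ} := by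
    intro n ξ hξ
    refine centroid_mem (hKconv.inter (hhalfconvex ξ (t n ξ)))
      (hKcomp.inter_right (hhalfclosed ξ (t n ξ))) ?_
    rw [ht n ξ hξ]
    exact (ENNReal.ofReal_pos.mpr (hδpos n)).ne'
  -- the key claim: in any direction the farthest point of K lies on the ray from z
  have hkeypt : ∀ ν : EuclideanSpace ℝ (Fin d), ‖ν‖ = 1 →
      ∃ x' ∈ K, (∀ y ∈ K, ⟪y, ν⟫_ℝ ≤ ⟪x', ν⟫_ℝ) ∧ x' = z + ⟪x' - z, ν⟫_ℝ • ν := by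
    intro ν hν
    set ξ : EuclideanSpace ℝ (Fin d) := -ν with hξdef
    have hξ : ‖ξ‖ = 1 := by rw [hξdef, norm_neg]; exact hν
    set x : ℕ → EuclideanSpace ℝ (Fin d) :=
      fun n => centroid volume (K ∩ {p | ⟪p, ξ⟫_ℝ ≤ t n ξ}) with hxdef
    have hxK : ∀ n, x n ∈ K := fun n => (hcapmem n ξ hξ).1
    have hxhalf : ∀ n, ⟪x n, ξ⟫_ℝ ≤ t n ξ := fun n => (hcapmem n ξ hξ).2
    obtain ⟨x', hx'K, φ, hφ, hxconv⟩ := hKcomp.tendsto_subseq hxK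
    have hlinen : ∀ n, x n = z - ⟪z - x n, ξ⟫_ℝ • ξ := by
      intro n
      obtain ⟨s, hs⟩ := hfloat n ξ hξ
      have hs' : z - x n = s • ξ := hs
      have h1 : ⟪z - x n, ξ⟫_ℝ = s := by
        rw [hs', real_inner_smul_left, real_inner_self_eq_norm_sq, hξ]; ring
      rw [h1, ← hs']; abel
    have hline' : x' = z - ⟪z - x', ξ⟫_ℝ • ξ := by
      have hcont : Continuous (fun p : EuclideanSpace ℝ (Fin d) =>
          z - ⟪z - p, ξ⟫_ℝ • ξ) := by
        apply Continuous.sub continuous_const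
        exact Continuous.smul
          (Continuous.inner (continuous_const.sub continuous_id) continuous_const :
            Continuous (fun p : EuclideanSpace ℝ (Fin d) => ⟪z - p, ξ⟫_ℝ))
          continuous_const
      have h1 : Tendsto (fun k => z - ⟪z - x (φ k), ξ⟫_ℝ • ξ) atTop
          (nhds (z - ⟪z - x', ξ⟫_ℝ • ξ)) := (hcont.tendsto x').comp hxconv
      have h2 : (fun k => z - ⟪z - x (φ k), ξ⟫_ℝ • ξ) = fun k => x (φ k) :=
        funext fun k => (hlinen (φ k)).symm
      rw [h2] at h1
      exact tendsto_nhds_unique hxconv h1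
    have hmin : ∀ y ∈ K, ⟪x', ξ⟫_ℝ ≤ ⟪y, ξ⟫_ℝ := by
      intro y hy
      have hres : ∀ ε : ℝ, 0 < ε → ⟪x', ξ⟫_ℝ ≤ ⟪y, ξ⟫_ℝ + ε := by
        intro ε hε
        obtain ⟨q, hqint, hqlt⟩ : ∃ q, q ∈ interior K ∧ ⟪q, ξ⟫_ℝ < ⟪y, ξ⟫_ℝ + ε := by
          set θ : ℝ := min 1 (ε / (2 * (|⟪w - y, ξ⟫_ℝ| + 1))) with hθdef
          have hθpos : 0 < θ := by
            apply lt_min one_pos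
            positivity
          have hθ1 : θ ≤ 1 := min_le_left _ _
          refine ⟨θ • w + (1 - θ) • y,
            hKconv.combo_interior_self_mem_interior hw hy hθpos (by linarith) (by ring), ?_⟩
          rw [inner_add_left, real_inner_smul_left, real_inner_smul_left]
          have hbound : θ * ⟪w - y, ξ⟫_ℝ < ε := by
            have h1 : θ * ⟪w - y, ξ⟫_ℝ ≤ θ * |⟪w - y, ξ⟫_ℝ| :=
              mul_le_mul_of_nonneg_left (le_abs_self _) hθpos.le
            have h2 : θ ≤ ε / (2 * (|⟪w - y, ξ⟫_ℝ| + 1)) := min_le_right _ _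
            have h3 : θ * |⟪w - y, ξ⟫_ℝ| ≤
                (ε / (2 * (|⟪w - y, ξ⟫_ℝ| + 1))) * |⟪w - y, ξ⟫_ℝ| :=
              mul_le_mul_of_nonneg_right h2 (abs_nonneg _)
            have h4 : (ε / (2 * (|⟪w - y, ξ⟫_ℝ| + 1))) * |⟪w - y, ξ⟫_ℝ| < ε := by
              rw [div_mul_eq_mul_div, div_lt_iff₀ (by positivity)]
              nlinarith [abs_nonneg ⟪w - y, ξ⟫_ℝ]
            linarith
          have hws : ⟪w - y, ξ⟫_ℝ = ⟪w, ξ⟫_ℝ - ⟪y, ξ⟫_ℝ := inner_sub_left _ _ _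
          nlinarith [hbound]
        obtain ⟨ρ, hρpos, hball⟩ : ∃ ρ > 0,
            ball q ρ ⊆ interior K ∩ {p : EuclideanSpace ℝ (Fin d) | ⟪p, ξ⟫_ℝ < ⟪y, ξ⟫_ℝ + ε} := by
          have hopen : IsOpen (interior K ∩
              {p : EuclideanSpace ℝ (Fin d) | ⟪p, ξ⟫_ℝ < ⟪y, ξ⟫_ℝ + ε}) :=
            isOpen_interior.inter (isOpen_lt (hinnercont ξ) continuous_const)
          rw [Metric.isOpen_iff] at hopen
          exact hopen q ⟨hqint, hqlt⟩
        have hcpos : (0 : ℝ≥0∞) < volume (ball q ρ) := measure_ball_pos volume q hρpos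
        have hcfin : volume (ball q ρ) ≠ ⊤ := measure_ball_lt_top.ne
        have hev : ∀ᶠ n in atTop, t n ξ < ⟪y, ξ⟫_ℝ + ε := by
          have hδev : ∀ᶠ n in atTop, δ n < (volume (ball q ρ)).toReal :=
            hδlim.eventually (gt_mem_nhds (ENNReal.toReal_pos hcpos.ne' hcfin))
          filter_upwards [hδev] with n hn
          by_contra hcon
          push_neg at hcon
          have hsub : ball q ρ ⊆ K ∩ {p : EuclideanSpace ℝ (Fin d) | ⟪p, ξ⟫_ℝ ≤ t n ξ} := by
            intro p hp
            obtain ⟨hp1, hp2⟩ := hball hp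
            exact ⟨interior_subset hp1, le_trans (le_of_lt hp2) hcon⟩
          have hmono := measure_mono (μ := (volume : Measure (EuclideanSpace ℝ (Fin d)))) hsub
          rw [ht n ξ hξ] at hmono
          have htr : (volume (ball q ρ)).toReal ≤ δ n := by
            have h2 := ENNReal.toReal_mono ENNReal.ofReal_ne_top hmono
            rwa [ENNReal.toReal_ofReal (hδpos n).le] at h2
          linarith
        have hφtop : Tendsto φ atTop atTop := hφ.tendsto_atTop
        have hev2 : ∀ᶠ k in atTop, ⟪x (φ k), ξ⟫_ℝ ≤ ⟪y, ξ⟫_ℝ + ε := by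
          filter_upwards [hφtop.eventually hev] with k hk
          exact le_trans (hxhalf (φ k)) hk.le
        have hx'lim : Tendsto (fun k => ⟪x (φ k), ξ⟫_ℝ) atTop (nhds ⟪x', ξ⟫_ℝ) :=
          ((hinnercont ξ).tendsto x').comp hxconv
        exact le_of_tendsto hx'lim hev2
      by_contra hcon
      push_neg at hcon
      have := hres ((⟪x', ξ⟫_ℝ - ⟪y, ξ⟫_ℝ) / 2) (by linarith)
      linarith
    refine ⟨x', hx'K, ?_, ?_⟩
    · intro y hy
      have h := hmin y hy
      rw [hξdef, inner_neg_right, inner_neg_right] at h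
      linarith
    · have h := hline'
      rw [hξdef, inner_neg_right, neg_smul_neg] at h
      have hsw : ⟪z - x', ν⟫_ℝ = -⟪x' - z, ν⟫_ℝ := by
        rw [inner_sub_left, inner_sub_left]; ring
      rw [hsw, neg_smul, sub_neg_eq_add] at h
      exact h
  -- the support-type function
  set g : EuclideanSpace ℝ (Fin d) → ℝ :=
    fun ν => sSup ((fun y => ⟪y - z, ν⟫_ℝ) '' K) with hgdef
  have himgne : ∀ ν : EuclideanSpace ℝ (Fin d),
      ((fun y => ⟪y - z, ν⟫_ℝ) '' K).Nonempty := fun ν => hKne.image _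
  have hbdd : ∀ ν : EuclideanSpace ℝ (Fin d), BddAbove ((fun y => ⟪y - z, ν⟫_ℝ) '' K) := by
    intro ν
    have hcont : ContinuousOn (fun y : EuclideanSpace ℝ (Fin d) => ⟪y - z, ν⟫_ℝ) K :=
      (Continuous.inner (continuous_id.sub continuous_const) continuous_const).continuousOn
    exact (hKcomp.image_of_continuousOn hcont).bddAbove
  have hgub : ∀ (ν : EuclideanSpace ℝ (Fin d)), ∀ y ∈ K, ⟪y - z, ν⟫_ℝ ≤ g ν :=
    fun ν y hy => le_csSup (hbdd ν) ⟨y, hy, rfl⟩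
  have hgmem : ∀ ν : EuclideanSpace ℝ (Fin d), ‖ν‖ = 1 → z + g ν • ν ∈ K := by
    intro ν hν
    obtain ⟨x', hx'K, hmax, hxline⟩ := hkeypt ν hν
    have hgx : g ν = ⟪x' - z, ν⟫_ℝ := by
      refine le_antisymm ?_ (hgub ν x' hx'K)
      refine csSup_le (himgne ν) ?_
      rintro s ⟨y, hy, rfl⟩
      have h := hmax y hy
      show ⟪y - z, ν⟫_ℝ ≤ ⟪x' - z, ν⟫_ℝ
      rw [inner_sub_left, inner_sub_left]
      linarith
    rw [hgx, ← hxline]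
    exact hx'K
  have hg0 : ∀ ν : EuclideanSpace ℝ (Fin d), ‖ν‖ = 1 → 0 ≤ g ν := by
    intro ν hν
    have h := hgub ν z hzK
    rwa [sub_self, inner_zero_left] at h
  have hgkey : ∀ ν ν' : EuclideanSpace ℝ (Fin d), ‖ν‖ = 1 → ‖ν'‖ = 1 →
      g ν * ⟪ν, ν'⟫_ℝ ≤ g ν' := by
    intro ν ν' hν hν'
    have h := hgub ν' _ (hgmem ν hν)
    rwa [add_sub_cancel_left, real_inner_smul_left] at h
  have hconst : ∀ ν ν' : EuclideanSpace ℝ (Fin d), ‖ν‖ = 1 → ‖ν'‖ = 1 → g ν = g ν' :=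
    fun ν ν' hν hν' => le_antisymm (sphere_chain_s11 hd g hg0 hgkey ν ν' hν hν')
      (sphere_chain_s11 hd g hg0 hgkey ν' ν hν' hν)
  set r : ℝ := g ν₀ with hrdef
  have hgr : ∀ ν : EuclideanSpace ℝ (Fin d), ‖ν‖ = 1 → g ν = r :=
    fun ν hν => hconst ν ν₀ hν hν₀
  have hr0 : 0 ≤ r := hg0 ν₀ hν₀
  have hKball : K = Metric.closedBall z r := by
    apply Set.Subset.antisymm
    · intro p hp
      rw [Metric.mem_closedBall, dist_eq_norm]
      by_cases hpz : p = z
      · simp [hpz, hr0]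
      · have hnz : p - z ≠ 0 := sub_ne_zero.mpr hpz
        set ν : EuclideanSpace ℝ (Fin d) := ‖p - z‖⁻¹ • (p - z) with hνdef
        have hν : ‖ν‖ = 1 := norm_smul_inv_norm hnz
        have h := hgub ν p hp
        rw [hgr ν hν] at h
        have hinner : ⟪p - z, ν⟫_ℝ = ‖p - z‖ := by
          rw [hνdef, real_inner_smul_right, real_inner_self_eq_norm_sq]
          rw [pow_two, ← mul_assoc, inv_mul_cancel₀ (norm_ne_zero_iff.mpr hnz), one_mul]
        linarith [hinner ▸ h]
    · intro p hp
      by_contra hpK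
      obtain ⟨f, u, hfK, hfp⟩ :=
        geometric_hahn_banach_closed_point hKconv hKcomp.isClosed hpK
      set wv := (InnerProductSpace.toDual ℝ (EuclideanSpace ℝ (Fin d))).symm f with hwvdef
      have hwf : ∀ q, ⟪wv, q⟫_ℝ = f q := fun q => InnerProductSpace.toDual_symm_apply
      have hwne : wv ≠ 0 := by
        intro h0
        have h1 := hwf p
        have h2 := hwf z
        rw [h0, inner_zero_left] at h1 h2
        have h3 := hfK z hzK
        rw [← h2] at h3
        rw [← h1] at hfp
        linarith
      set ν : EuclideanSpace ℝ (Fin d) := ‖wv‖⁻¹ • wv with hνdef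
      have hν : ‖ν‖ = 1 := norm_smul_inv_norm hwne
      have hwpos : (0 : ℝ) < ‖wv‖⁻¹ := by
        rw [inv_pos]
        exact norm_pos_iff.mpr hwne
      have hcompute : ∀ q : EuclideanSpace ℝ (Fin d),
          ⟪q - z, ν⟫_ℝ = ‖wv‖⁻¹ * (f q - f z) := by
        intro q
        rw [hνdef, real_inner_smul_right, real_inner_comm, hwf, map_sub]
      have hgle : g ν ≤ ‖wv‖⁻¹ * (u - f z) := by
        refine csSup_le (himgne ν) ?_
        rintro s ⟨y, hy, rfl⟩
        show ⟪y - z, ν⟫_ℝ ≤ ‖wv‖⁻¹ * (u - f z)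
        rw [hcompute y]
        exact mul_le_mul_of_nonneg_left (by linarith [hfK y hy]) hwpos.le
      have hplt : ‖wv‖⁻¹ * (u - f z) < ⟪p - z, ν⟫_ℝ := by
        rw [hcompute p]
        exact mul_lt_mul_of_pos_left (by linarith [hfp]) hwpos
      have hcs : ⟪p - z, ν⟫_ℝ ≤ ‖p - z‖ := by
        calc ⟪p - z, ν⟫_ℝ ≤ ‖p - z‖ * ‖ν‖ := real_inner_le_norm _ _
          _ = ‖p - z‖ := by rw [hν, mul_one]
      have hdist : ‖p - z‖ ≤ r := by rwa [Metric.mem_closedBall, dist_eq_norm] at hp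
      rw [hgr ν hν] at hgle
      linarith
  refine ⟨z, r, ?_, hKball⟩
  rcases lt_or_eq_of_le hr0 with h | h
  · exact h
  · exfalso
    have hsingle : K = {z} := by rw [hKball, ← h, Metric.closedBall_zero]
    apply hKvol
    rw [hsingle]
    exact measure_singleton z
end
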